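/- arXiv:2408.10346 — 9 statements merged into one kernel-verified Lean document; each statement's English description precedes it below -/
import Mathlib

section
/- If a Condorcet consistent tournament rule on n ≥ 3 agents is monotone and 2-NM_λ-α (i.e., for all pairs i ≠ j and {i,j}-adjacent tournaments T, T', r_i(T') + r_j(T') ≤ r_i(T) + r_j(T) + λ·max{r_i(T) − r_i(T'), r_j(T) − r_j(T')} + α), then λ ≥ 1 − 3α. -/
open Classical Finset

structure Tournament (n : ℕ) where
  beats : Fin n → Fin n → Prop
  irrefl : ∀ i, ¬ beats i i
  total : ∀ i j, i ≠ j → (beats i j ↔ ¬ beats j i)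

/-- `r` maps each tournament to a probability distribution over the agents. -/
def IsProbRule {n : ℕ} (r : Tournament n → Fin n → ℝ) : Prop :=
  ∀ T, (∀ i, 0 ≤ r T i) ∧ ∑ i, r T i = 1

/-- `T` and `T'` agree on all matches except possibly the one between `i` and `j`. -/
def Adjacent {n : ℕ} (i j : Fin n) (T T' : Tournament n) : Prop :=
  ∀ a b, ¬((a = i ∧ b = j) ∨ (a = j ∧ b = i)) → (T.beats a b ↔ T'.beats a b)

def CondorcetConsistent {n : ℕ} (r : Tournament n → Fin n → ℝ) : Prop :=
  ∀ T i, (∀ j, j ≠ i → T.beats i j) → r T i = 1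

def MonotoneRule {n : ℕ} (r : Tournament n → Fin n → ℝ) : Prop :=
  ∀ i j (T T' : Tournament n), i ≠ j → Adjacent i j T T' → T ≠ T' →
    T.beats i j → r T' i ≤ r T i

/-- 2-NM_λ-α. -/
def TwoNM {n : ℕ} (lam alpha : ℝ) (r : Tournament n → Fin n → ℝ) : Prop :=
  ∀ i j (T T' : Tournament n), i ≠ j → Adjacent i j T T' → T ≠ T' →
    r T' i + r T' j ≤
      r T i + r T j + lam * max (r T i - r T' i) (r T j - r T' j) + alpha

/-- A tournament on `Fin n` determined by three booleans for the matches among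
agents 0,1,2 (e01 : does 0 beat 1, etc.), all other matches decided by index order. -/
def TB (e01 e12 e02 : Bool) (x y : ℕ) : Bool :=
  if x = 0 ∧ y = 1 then e01
  else if x = 1 ∧ y = 0 then !e01
  else if x = 1 ∧ y = 2 then e12
  else if x = 2 ∧ y = 1 then !e12
  else if x = 0 ∧ y = 2 then e02
  else if x = 2 ∧ y = 0 then !e02
  else decide (x < y)

set_option maxHeartbeats 1000000 in
def mkT (n : ℕ) (e01 e12 e02 : Bool) : Tournament n where
  beats i j := TB e01 e12 e02 i.val j.val = true
  irrefl i := by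
    intro hc
    unfold TB at hc
    split_ifs at hc <;> first | omega | (simp_all; omega) | simp_all
  total i j hij := by
    have hv : i.val ≠ j.val := fun h => hij (Fin.ext h)
    show TB e01 e12 e02 i.val j.val = true ↔ ¬ TB e01 e12 e02 j.val i.val = true
    unfold TB
    split_ifs <;> first | omega | (simp_all; omega) | simp_all

set_option maxHeartbeats 1000000 in
lemma TB_adj01 (e01 f01 e12 e02 : Bool) (x y : ℕ)
    (h : ¬((x = 0 ∧ y = 1) ∨ (x = 1 ∧ y = 0))) :
    TB e01 e12 e02 x y = TB f01 e12 e02 x y := by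
  unfold TB
  split_ifs <;> first | omega | (simp_all; omega) | simp_all

set_option maxHeartbeats 1000000 in
lemma TB_adj12 (e01 e12 f12 e02 : Bool) (x y : ℕ)
    (h : ¬((x = 1 ∧ y = 2) ∨ (x = 2 ∧ y = 1))) :
    TB e01 e12 e02 x y = TB e01 f12 e02 x y := by
  unfold TB
  split_ifs <;> first | omega | (simp_all; omega) | simp_all

set_option maxHeartbeats 1000000 in
lemma TB_adj02 (e01 e12 e02 f02 : Bool) (x y : ℕ)
    (h : ¬((x = 0 ∧ y = 2) ∨ (x = 2 ∧ y = 0))) :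
    TB e01 e12 e02 x y = TB e01 e12 f02 x y := by
  unfold TB
  split_ifs <;> first | omega | (simp_all; omega) | simp_all

lemma TB_winner0 (y : ℕ) (hy : y ≠ 0) : TB true true true 0 y = true := by
  unfold TB
  split_ifs <;> first | omega | (simp_all; omega) | simp_all

lemma TB_winner1 (y : ℕ) (hy : y ≠ 1) : TB false true false 1 y = true := by
  unfold TB
  split_ifs <;> first | omega | (simp_all; omega) | simp_all

lemma TB_winner2 (y : ℕ) (hy : y ≠ 2) : TB true false false 2 y = true := by
  unfold TB
  split_ifs <;> first | omega | (simp_all; omega) | simp_all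

theorem stmt0 {n : ℕ} (hn : 3 ≤ n) (r : Tournament n → Fin n → ℝ)
    (hr : IsProbRule r) (lam alpha : ℝ) (hlam : 0 ≤ lam) (halpha : 0 ≤ alpha)
    (hcc : CondorcetConsistent r) (hmono : MonotoneRule r)
    (hnm : TwoNM lam alpha r) :
    1 - 3 * alpha ≤ lam := by
  have h0 : (0:ℕ) < n := by omega
  have h1 : (1:ℕ) < n := by omega
  have h2 : (2:ℕ) < n := by omega
  set a : Fin n := ⟨0, h0⟩ with ha
  set b : Fin n := ⟨1, h1⟩ with hb
  set c : Fin n := ⟨2, h2⟩ with hc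
  have hab : a ≠ b := fun h => by simpa using congrArg Fin.val h
  have hbc : b ≠ c := fun h => by
    have := congrArg Fin.val h; rw [hb, hc] at this; simp at this
  have hac : a ≠ c := fun h => by simpa using congrArg Fin.val h
  -- the cyclic tournament T : a beats b, b beats c, c beats a
  set T : Tournament n := mkT n true true false with hT
  -- Condorcet tournaments
  set Ta : Tournament n := mkT n true true true with hTa
  set Tb : Tournament n := mkT n false true false with hTb
  set Tc : Tournament n := mkT n true false false with hTc
  -- basic probability facts
  have hnn : ∀ (S : Tournament n) i, 0 ≤ r S i := fun S i => (hr S).1 i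
  have hle1 : ∀ (S : Tournament n) i, r S i ≤ 1 := by
    intro S i
    calc r S i ≤ ∑ j, r S j :=
          Finset.single_le_sum (fun j _ => (hr S).1 j) (mem_univ i)
      _ = 1 := (hr S).2
  -- Condorcet winners
  have hAwin : r Ta a = 1 := by
    apply hcc
    intro j hj
    have hv : j.val ≠ 0 := fun h => hj (Fin.ext h)
    exact TB_winner0 j.val hv
  have hBwin : r Tb b = 1 := by
    apply hcc
    intro j hj
    have hv : j.val ≠ 1 := fun h => hj (Fin.ext h)
    exact TB_winner1 j.val hv
  have hCwin : r Tc c = 1 := by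
    apply hcc
    intro j hj
    have hv : j.val ≠ 2 := fun h => hj (Fin.ext h)
    exact TB_winner2 j.val hv
  -- adjacencies
  have hadj_a : Adjacent a c T Ta := by
    intro x y hxy
    have h' : ¬((x.val = 0 ∧ y.val = 2) ∨ (x.val = 2 ∧ y.val = 0)) := by
      intro hcon
      apply hxy
      rcases hcon with ⟨p, q⟩ | ⟨p, q⟩
      · exact Or.inl ⟨Fin.ext p, Fin.ext q⟩
      · exact Or.inr ⟨Fin.ext p, Fin.ext q⟩
    show TB true true false x.val y.val = true ↔ TB true true true x.val y.val = true
    rw [TB_adj02 true true false true x.val y.val h']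
  have hadj_b : Adjacent a b T Tb := by
    intro x y hxy
    have h' : ¬((x.val = 0 ∧ y.val = 1) ∨ (x.val = 1 ∧ y.val = 0)) := by
      intro hcon
      apply hxy
      rcases hcon with ⟨p, q⟩ | ⟨p, q⟩
      · exact Or.inl ⟨Fin.ext p, Fin.ext q⟩
      · exact Or.inr ⟨Fin.ext p, Fin.ext q⟩
    show TB true true false x.val y.val = true ↔ TB false true false x.val y.val = true
    rw [TB_adj01 true false true false x.val y.val h']
  have hadj_c : Adjacent b c T Tc := by
    intro x y hxy
    have h' : ¬((x.val = 1 ∧ y.val = 2) ∨ (x.val = 2 ∧ y.val = 1)) := by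
      intro hcon
      apply hxy
      rcases hcon with ⟨p, q⟩ | ⟨p, q⟩
      · exact Or.inl ⟨Fin.ext p, Fin.ext q⟩
      · exact Or.inr ⟨Fin.ext p, Fin.ext q⟩
    show TB true true false x.val y.val = true ↔ TB true false false x.val y.val = true
    rw [TB_adj12 true true false false x.val y.val h']
  -- the tournaments differ
  have hne_a : T ≠ Ta := by
    intro h
    have hb' : Ta.beats a c := by
      show TB true true true 0 2 = true; rfl
    rw [← h] at hb'
    have : TB true true false 0 2 = true := hb'
    simp [TB] at this
  have hne_b : T ≠ Tb := by
    intro h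
    have hb' : T.beats a b := by
      show TB true true false 0 1 = true; rfl
    rw [h] at hb'
    have : TB false true false 0 1 = true := hb'
    simp [TB] at this
  have hne_c : T ≠ Tc := by
    intro h
    have hb' : T.beats b c := by
      show TB true true false 1 2 = true; rfl
    rw [h] at hb'
    have : TB true false false 1 2 = true := hb'
    simp [TB] at this
  -- three NM inequalities
  have k1 := hnm a c T Ta hac hadj_a hne_a
  have k2 := hnm a b T Tb hab hadj_b hne_b
  have k3 := hnm b c T Tc hbc hadj_c hne_c
  have m1 : max (r T a - r Ta a) (r T c - r Ta c) ≤ r T c := by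
    apply max_le
    · linarith [hle1 T a, hAwin, hnn T c]
    · linarith [hnn Ta c]
  have m2 : max (r T a - r Tb a) (r T b - r Tb b) ≤ r T a := by
    apply max_le
    · linarith [hnn Tb a]
    · linarith [hle1 T b, hBwin, hnn T a]
  have m3 : max (r T b - r Tc b) (r T c - r Tc c) ≤ r T b := by
    apply max_le
    · linarith [hnn Tc b]
    · linarith [hle1 T c, hCwin, hnn T b]
  have lm1 : lam * max (r T a - r Ta a) (r T c - r Ta c) ≤ lam * r T c :=
    mul_le_mul_of_nonneg_left m1 hlam
  have lm2 : lam * max (r T a - r Tb a) (r T b - r Tb b) ≤ lam * r T a :=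
    mul_le_mul_of_nonneg_left m2 hlam
  have lm3 : lam * max (r T b - r Tc b) (r T c - r Tc c) ≤ lam * r T b :=
    mul_le_mul_of_nonneg_left m3 hlam
  have ineq1 : (1:ℝ) ≤ r T a + r T c + lam * r T c + alpha := by
    have := hnn Ta c; linarith
  have ineq2 : (1:ℝ) ≤ r T a + r T b + lam * r T a + alpha := by
    have := hnn Tb a; linarith
  have ineq3 : (1:ℝ) ≤ r T b + r T c + lam * r T b + alpha := by
    have := hnn Tc b; linarith
  -- the three probabilities sum to at most 1
  have hsub : ({a, b, c} : Finset (Fin n)).sum (r T) ≤ ∑ j, r T j :=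
    Finset.sum_le_sum_of_subset_of_nonneg (Finset.subset_univ _)
      (fun j _ _ => hnn T j)
  have habs : a ∉ ({b, c} : Finset (Fin n)) := by
    simp [hab, hac]
  have hbs : b ∉ ({c} : Finset (Fin n)) := by
    simp [hbc]
  have hsum3 : ({a, b, c} : Finset (Fin n)).sum (r T) = r T a + r T b + r T c := by
    rw [Finset.sum_insert habs, Finset.sum_insert hbs, Finset.sum_singleton]
    ring
  have hs : r T a + r T b + r T c ≤ 1 := by
    rw [hsum3] at hsub
    rw [(hr T).2] at hsub
    exact hsub
  have hls : lam * r T a + lam * r T b + lam * r T c ≤ lam := by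
    have h := mul_le_mul_of_nonneg_left hs hlam
    nlinarith
  linarith
end

section
/- The top cycle of a tournament exists and is unique: for every tournament on a finite nonempty set of agents, there is exactly one minimal nonempty subset S of agents such that every agent in S beats every agent outside S. -/
open Finset

/-- A tournament on an arbitrary finite set of agents. -/
structure Tourney (A : Type*) where
  beats : A → A → Prop
  irrefl : ∀ i, ¬ beats i i
  total : ∀ i j, i ≠ j → (beats i j ↔ ¬ beats j i)

theorem dom_comparable {A : Type*} [Fintype A] (T : Tourney A) (S S' : Finset A)
    (hS : ∀ i ∈ S, ∀ j ∉ S, T.beats i j) (hS' : ∀ i ∈ S', ∀ j ∉ S', T.beats i j) :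
    S ⊆ S' ∨ S' ⊆ S := by
  by_contra h
  push_neg at h
  obtain ⟨h1, h2⟩ := h
  obtain ⟨i, hiS, hiS'⟩ := not_subset.mp h1
  obtain ⟨j, hjS', hjS⟩ := not_subset.mp h2
  have hij : i ≠ j := fun e => hiS' (e ▸ hjS')
  have b1 := hS i hiS j hjS
  have b2 := hS' j hjS' i hiS'
  exact (T.total i j hij).mp b1 b2

/-- Existence and uniqueness of the top cycle: there is exactly one minimal
nonempty dominant subset of agents. -/
theorem stmt6 {A : Type*} [Fintype A] [DecidableEq A] [Nonempty A] (T : Tourney A) :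
    ∃! S : Finset A,
      (S.Nonempty ∧ ∀ i ∈ S, ∀ j ∉ S, T.beats i j) ∧
        ∀ S' : Finset A, (S'.Nonempty ∧ ∀ i ∈ S', ∀ j ∉ S', T.beats i j) → ¬ S' ⊂ S := by
  set P : Finset A → Prop := fun S => S.Nonempty ∧ ∀ i ∈ S, ∀ j ∉ S, T.beats i j with hP
  classical
  have huniv : P Finset.univ := ⟨univ_nonempty, fun i _ j hj => absurd (mem_univ j) hj⟩
  -- pick a P-set of minimal cardinality
  obtain ⟨S, hSP, hmin⟩ := Finset.exists_min_image
    (Finset.univ.filter P) Finset.card ⟨Finset.univ, by simpa using huniv⟩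
  simp only [mem_filter, mem_univ, true_and] at hSP hmin
  have hminimal : ∀ S' : Finset A, P S' → ¬ S' ⊂ S := by
    intro S' hS' hss
    have := hmin S' (by simpa using hS')
    exact absurd (Finset.card_lt_card hss) (not_lt.mpr this)
  refine ⟨S, ⟨hSP, hminimal⟩, ?_⟩
  intro S' ⟨hS'P, hS'min⟩
  rcases dom_comparable T S S' hSP.2 hS'P.2 with h | h
  · rcases eq_or_ne S S' with e | e
    · exact e.symm
    · exact absurd (ssubset_of_subset_of_ne h e) (hS'min S hSP)
  · rcases eq_or_ne S' S with e | e
    · exact e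
    · exact absurd (ssubset_of_subset_of_ne h e) (hminimal S' hS'P)
end

section
/- Let r be a 2-NM_λ tournament rule for some λ > 0. Then r is monotone if and only if for all i ≠ j and all {i,j}-adjacent tournaments T ≠ T' with j beating i in T, we have r_i(T') − r_i(T) ≤ (λ + 1)·(r_j(T) − r_j(T')). -/
open Classical Finset

lemma Tournament.ext' {n : ℕ} {T T' : Tournament n} (h : T.beats = T'.beats) :
    T = T' := by
  cases T; cases T'; cases h; rfl

lemma Adjacent.symm_idx {n : ℕ} {i j : Fin n} {T T' : Tournament n}
    (h : Adjacent i j T T') : Adjacent j i T T' := by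
  intro a b hab
  exact h a b (by tauto)

lemma Adjacent.symm {n : ℕ} {i j : Fin n} {T T' : Tournament n}
    (h : Adjacent i j T T') : Adjacent i j T' T := by
  intro a b hab
  exact (h a b hab).symm

/-- If `T ≠ T'` are `{i,j}`-adjacent and `j` beats `i` in `T`, then `i` beats `j` in `T'`. -/
lemma flip_beats {n : ℕ} {i j : Fin n} {T T' : Tournament n} (hij : i ≠ j)
    (hadj : Adjacent i j T T') (hne : T ≠ T') (hji : T.beats j i) :
    T'.beats i j := by
  by_contra h
  have hji' : T'.beats j i := ((T'.total j i hij.symm).mpr h)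
  have hnotij : ¬ T.beats i j := fun h' => (T.total i j hij).mp h' hji
  apply hne
  apply Tournament.ext'
  funext a b
  apply propext
  by_cases hab : (a = i ∧ b = j) ∨ (a = j ∧ b = i)
  · rcases hab with ⟨ha, hb⟩ | ⟨ha, hb⟩
    · subst ha; subst hb
      constructor
      · intro h'; exact absurd h' hnotij
      · intro h'; exact absurd h' h
    · subst ha; subst hb
      exact ⟨fun _ => hji', fun _ => hji⟩
  · exact hadj a b hab

theorem stmt8 {n : ℕ} (r : Tournament n → Fin n → ℝ) (hr : IsProbRule r)
    (lam : ℝ) (hlam : 0 < lam) (hnm : TwoNM lam 0 r) :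
    MonotoneRule r ↔
      ∀ i j (T T' : Tournament n), i ≠ j → Adjacent i j T T' → T ≠ T' →
        T.beats j i → r T' i - r T i ≤ (lam + 1) * (r T j - r T' j) := by
  constructor
  · intro hmono i j T T' hij hadj hne hji
    -- i beats j in T'
    have hij' : T'.beats i j := flip_beats hij hadj hne hji
    -- monotonicity: r T i ≤ r T' i
    have hm : r T i ≤ r T' i := hmono i j T' T hij hadj.symm hne.symm hij'
    have hnm' := hnm i j T T' hij hadj hne
    rcases max_cases (r T i - r T' i) (r T j - r T' j) with ⟨heq, hle⟩ | ⟨heq, hle⟩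
    · rw [heq] at hnm'
      have ha : 0 ≤ r T' i - r T i := by linarith
      have hb : r T' i - r T i ≤ r T j - r T' j := by
        nlinarith [mul_nonneg hlam.le ha]
      have hbpos : 0 ≤ r T j - r T' j := ha.trans hb
      nlinarith [mul_nonneg hlam.le hbpos]
    · rw [heq] at hnm'
      nlinarith
  · intro hcond i j T T' hij hadj hne hbij
    -- T'.beats j i
    have hji' : T'.beats j i := flip_beats hij.symm hadj.symm_idx hne hbij
    -- instantiation 1: (j, i, T, T'), needs T.beats i j
    have h1 := hcond j i T T' hij.symm hadj.symm_idx hne hbij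
    -- instantiation 2: (i, j, T', T), needs T'.beats j i
    have h2 := hcond i j T' T hij hadj.symm hne.symm hji'
    -- h1 : r T' j - r T j ≤ (lam+1)*(r T i - r T' i)
    -- h2 : r T i - r T' i ≤ (lam+1)*(r T' j - r T j)
    nlinarith [h1, h2, mul_pos hlam hlam]
end

section
/- In the superman-kryptonite tournament T on n agents, under the Iterative Condorcet Rule, agent 1 wins with probability 1/2 − 1/(n(n−1)) and agent n wins with probability 2/(n(n−1)). -/
open Classical Finset

/-- Agents still alive after the first `t` eliminations, when the elimination
order is given by the permutation `π` (agent `π k` is eliminated at step `k`). -/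
def remainingAfter {n : ℕ} (π : Equiv.Perm (Fin n)) (t : ℕ) : Finset (Fin n) :=
  Finset.univ.filter fun i => t ≤ ((π.symm i : Fin n) : ℕ)

/-- `w` beats every other member of `S`. -/
def IsCondorcetIn {n : ℕ} (T : Tournament n) (S : Finset (Fin n)) (w : Fin n) : Prop :=
  w ∈ S ∧ ∀ j ∈ S, j ≠ w → T.beats w j

/-- The Iterative Condorcet Rule with (uniformly random) elimination order `π`
declares `w` the winner: `w` is a Condorcet winner among the remaining agents at
the first time some remaining agent beats all other remaining agents. -/
def ICRWins {n : ℕ} (T : Tournament n) (π : Equiv.Perm (Fin n)) (w : Fin n) : Prop :=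
  ∃ t, IsCondorcetIn T (remainingAfter π t) w ∧
    ∀ s < t, ¬ ∃ v, IsCondorcetIn T (remainingAfter π s) v



section SKAux

lemma fixpair_card {n : ℕ} (x y : Fin n) (hxy : x ≠ y) :
    (univ.filter fun π : Equiv.Perm (Fin n) => π x = x ∧ π y = y).card = (n-2).factorial := by
  have key : Fintype.card {π : Equiv.Perm (Fin n) // π x = x ∧ π y = y} = (n-2).factorial := by
    have e1 := Equiv.Perm.subtypeEquivSubtypePerm (fun z : Fin n => z ≠ x ∧ z ≠ y)
    have e2 : {f : Equiv.Perm (Fin n) // ∀ a, ¬(a ≠ x ∧ a ≠ y) → f a = a} ≃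
        {π : Equiv.Perm (Fin n) // π x = x ∧ π y = y} := by
      apply Equiv.subtypeEquivRight
      intro f
      constructor
      · intro h
        exact ⟨h x (by simp), h y (by simp)⟩
      · intro h a ha
        rcases not_and_or.mp ha with h1 | h1 <;> rw [not_not.mp h1]
        exacts [h.1, h.2]
    have hcard : Fintype.card {z : Fin n // z ≠ x ∧ z ≠ y} = n - 2 := by
      rw [Fintype.card_subtype]
      have : (univ.filter fun z : Fin n => z ≠ x ∧ z ≠ y) = univ \ {x, y} := by
        ext z; simp [not_or]
      rw [this, card_sdiff_of_subset (by simp)]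
      simp [card_insert_of_notMem, hxy, Finset.card_pair hxy]
    calc Fintype.card {π : Equiv.Perm (Fin n) // π x = x ∧ π y = y}
        = Fintype.card (Equiv.Perm {z : Fin n // z ≠ x ∧ z ≠ y}) :=
          (Fintype.card_congr (e1.trans e2)).symm
      _ = (n-2).factorial := by rw [Fintype.card_perm, hcard]
  rw [← key, Fintype.card_subtype]



lemma fiber_card_aux {n : ℕ} (x y p q : Fin n) (hxy : x ≠ y) (hpq : p ≠ q)
    (hfix : (univ.filter fun π : Equiv.Perm (Fin n) => π x = x ∧ π y = y).card = (n-2).factorial) :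
    (univ.filter fun π : Equiv.Perm (Fin n) => π x = p ∧ π y = q).card = (n-2).factorial := by
  set σ : Equiv.Perm (Fin n) :=
    (Equiv.swap (Equiv.swap x p y) q) * (Equiv.swap x p) with hσ
  have h1 : Equiv.swap x p y ≠ p := fun h =>
    hxy ((Equiv.swap x p).injective (h.trans (Equiv.swap_apply_left x p).symm) : y = x).symm
  have hσx : σ x = p := by
    simp only [hσ, Equiv.Perm.mul_apply, Equiv.swap_apply_left]
    exact Equiv.swap_apply_of_ne_of_ne (Ne.symm h1) hpq
  have hσy : σ y = q := by
    simp only [hσ, Equiv.Perm.mul_apply, Equiv.swap_apply_left]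
  rw [← hfix]
  apply Finset.card_bij' (fun π _ => σ⁻¹ * π) (fun π _ => σ * π)
  · intro π hπ
    simp only [mem_filter, mem_univ, true_and] at hπ ⊢
    refine ⟨?_, ?_⟩ <;> rw [Equiv.Perm.mul_apply]
    · rw [hπ.1, ← hσx]; simp
    · rw [hπ.2, ← hσy]; simp
  · intro π hπ
    simp only [mem_filter, mem_univ, true_and] at hπ ⊢
    refine ⟨?_, ?_⟩ <;> rw [Equiv.Perm.mul_apply]
    · rw [hπ.1]; exact hσx
    · rw [hπ.2]; exact hσy
  · intro π _; group
  · intro π _; group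


lemma fiber_card {n : ℕ} (x y p q : Fin n) (hxy : x ≠ y) (hpq : p ≠ q) :
    (univ.filter fun π : Equiv.Perm (Fin n) => π x = p ∧ π y = q).card = (n-2).factorial :=
  fiber_card_aux x y p q hxy hpq (fixpair_card x y hxy)

lemma count_main {n : ℕ} (hn : 3 ≤ n) (z l : Fin n) (hz : z.1 = 0) (hl : l.1 = n - 1) :
    2 * (univ.filter fun π : Equiv.Perm (Fin n) =>
        ((π.symm l : ℕ) < (π.symm z : ℕ) ∧ (π.symm l : ℕ) + 3 ≤ n)).card
      + 2 * (n-2).factorial = n.factorial ∧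
    (univ.filter fun π : Equiv.Perm (Fin n) =>
        (n - 2 ≤ (π.symm z : ℕ) ∧ n - 2 ≤ (π.symm l : ℕ))).card = 2 * (n-2).factorial := by
  have hzl : z ≠ l := fun h => by rw [h] at hz; omega
  have hfin1 : (⟨n-1, by omega⟩ : Fin n) ≠ ⟨n-2, by omega⟩ := by
    simp only [ne_eq, Fin.mk.injEq]; omega
  -- generic: filters on π.symm values
  have hfib : ∀ (u v : Fin n), u ≠ v →
      (univ.filter fun π : Equiv.Perm (Fin n) => π.symm z = u ∧ π.symm l = v).card
        = (n-2).factorial := by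
    intro u v huv
    have : (univ.filter fun π : Equiv.Perm (Fin n) => π.symm z = u ∧ π.symm l = v)
        = univ.filter fun π : Equiv.Perm (Fin n) => π u = z ∧ π v = l := by
      apply filter_congr
      intro π _
      rw [Equiv.symm_apply_eq, Equiv.symm_apply_eq, eq_comm (a := z), eq_comm (a := l)]
    rw [this]
    exact fiber_card u v z l huv hzl
  constructor
  · -- superman count
    have hsym : ∀ (π : Equiv.Perm (Fin n)) (i : Fin n),
        (Equiv.swap z l * π).symm i = π.symm (Equiv.swap z l i) := by
      intro π i
      rw [Equiv.Perm.mul_def, Equiv.symm_trans_apply, Equiv.symm_swap]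
    have hswap : (univ.filter fun π : Equiv.Perm (Fin n) =>
          (π.symm l : ℕ) < (π.symm z : ℕ)).card
        = (univ.filter fun π : Equiv.Perm (Fin n) =>
          (π.symm z : ℕ) < (π.symm l : ℕ)).card := by
      apply Finset.card_bij' (fun π _ => Equiv.swap z l * π) (fun π _ => Equiv.swap z l * π)
      · intro π hπ
        simp only [mem_filter, mem_univ, true_and] at hπ ⊢
        rw [hsym, hsym, Equiv.swap_apply_left, Equiv.swap_apply_right]
        exact hπ
      · intro π hπ
        simp only [mem_filter, mem_univ, true_and] at hπ ⊢
        rw [hsym, hsym, Equiv.swap_apply_left, Equiv.swap_apply_right]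
        exact hπ
      · intro π _; rw [← mul_assoc, Equiv.swap_mul_self, one_mul]
      · intro π _; rw [← mul_assoc, Equiv.swap_mul_self, one_mul]
    have htot : (univ.filter fun π : Equiv.Perm (Fin n) =>
          (π.symm l : ℕ) < (π.symm z : ℕ)).card
        + (univ.filter fun π : Equiv.Perm (Fin n) =>
          (π.symm z : ℕ) < (π.symm l : ℕ)).card = n.factorial := by
      have hne : ∀ π : Equiv.Perm (Fin n), (π.symm z : ℕ) ≠ (π.symm l : ℕ) :=
        fun π h => hzl (π.symm.injective (Fin.ext h))
      have h1 := Finset.card_filter_add_card_filter_not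
        (s := (univ : Finset (Equiv.Perm (Fin n))))
        (p := fun π => (π.symm l : ℕ) < (π.symm z : ℕ))
      have h2 : (univ.filter fun π : Equiv.Perm (Fin n) =>
            ¬ (π.symm l : ℕ) < (π.symm z : ℕ))
          = univ.filter fun π : Equiv.Perm (Fin n) => (π.symm z : ℕ) < (π.symm l : ℕ) := by
        apply filter_congr
        intro π _
        have := hne π
        constructor <;> intro <;> omega
      rw [h2] at h1
      rw [h1, card_univ, Fintype.card_perm, Fintype.card_fin]
    have hsplit := Finset.card_filter_add_card_filter_not
      (s := univ.filter fun π : Equiv.Perm (Fin n) => (π.symm l : ℕ) < (π.symm z : ℕ))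
      (p := fun π => (π.symm l : ℕ) + 3 ≤ n)
    rw [Finset.filter_filter, Finset.filter_filter] at hsplit
    have hbad : (univ.filter fun π : Equiv.Perm (Fin n) =>
          (π.symm l : ℕ) < (π.symm z : ℕ) ∧ ¬ (π.symm l : ℕ) + 3 ≤ n).card
        = (n-2).factorial := by
      have heq : (univ.filter fun π : Equiv.Perm (Fin n) =>
            (π.symm l : ℕ) < (π.symm z : ℕ) ∧ ¬ (π.symm l : ℕ) + 3 ≤ n)
          = univ.filter fun π : Equiv.Perm (Fin n) =>
            π.symm z = ⟨n-1, by omega⟩ ∧ π.symm l = ⟨n-2, by omega⟩ := by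
        apply filter_congr
        intro π _
        have h1 := (π.symm z).isLt
        have h2 := (π.symm l).isLt
        rw [Fin.ext_iff, Fin.ext_iff]
        show _ ∧ _ ↔ (π.symm z : ℕ) = n - 1 ∧ (π.symm l : ℕ) = n - 2
        omega
      rw [heq]
      exact hfib _ _ hfin1
    rw [hbad] at hsplit
    omega
  · -- kryptonite count
    have heq : (univ.filter fun π : Equiv.Perm (Fin n) =>
          (n - 2 ≤ (π.symm z : ℕ) ∧ n - 2 ≤ (π.symm l : ℕ)))
        = (univ.filter fun π : Equiv.Perm (Fin n) =>
            π.symm z = ⟨n-2, by omega⟩ ∧ π.symm l = ⟨n-1, by omega⟩)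
          ∪ (univ.filter fun π : Equiv.Perm (Fin n) =>
            π.symm z = ⟨n-1, by omega⟩ ∧ π.symm l = ⟨n-2, by omega⟩) := by
      rw [← Finset.filter_or]
      apply filter_congr
      intro π _
      have h1 := (π.symm z).isLt
      have h2 := (π.symm l).isLt
      have hne : (π.symm z : ℕ) ≠ (π.symm l : ℕ) :=
        fun h => hzl (π.symm.injective (Fin.ext h))
      rw [Fin.ext_iff, Fin.ext_iff, Fin.ext_iff, Fin.ext_iff]
      show _ ∧ _ ↔ ((π.symm z : ℕ) = n - 2 ∧ (π.symm l : ℕ) = n - 1)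
        ∨ ((π.symm z : ℕ) = n - 1 ∧ (π.symm l : ℕ) = n - 2)
      omega
    rw [heq, Finset.card_union_of_disjoint, hfib _ _ (Ne.symm hfin1), hfib _ _ hfin1]
    · omega
    · rw [Finset.disjoint_filter]
      rintro π _ ⟨hz1, -⟩ ⟨hz2, -⟩
      rw [hz1] at hz2
      exact hfin1 (Fin.ext (Fin.ext_iff.mp hz2).symm)


lemma icr_char {n : ℕ} (hn : 3 ≤ n) (T : Tournament n)
    (hT : ∀ i j : Fin n, T.beats i j ↔
      ((i.1 < j.1 ∧ ¬(i.1 = 0 ∧ j.1 = n - 1)) ∨ (i.1 = n - 1 ∧ j.1 = 0)))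
    (z l : Fin n) (hz : z.1 = 0) (hl : l.1 = n - 1) (π : Equiv.Perm (Fin n)) :
    (ICRWins T π z ↔
      ((π.symm l : ℕ) < (π.symm z : ℕ) ∧ (π.symm l : ℕ) + 3 ≤ n)) ∧
    (ICRWins T π l ↔
      (n - 2 ≤ (π.symm z : ℕ) ∧ n - 2 ≤ (π.symm l : ℕ))) := by
  have hzl : z ≠ l := fun h => by rw [h] at hz; omega
  set a : ℕ := (π.symm z : ℕ) with ha'
  set b : ℕ := (π.symm l : ℕ) with hb'
  have hab : a ≠ b := fun h => hzl (π.symm.injective (Fin.ext h))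
  have haN : a ≤ n - 1 := by have := (π.symm z).isLt; omega
  have hbN : b ≤ n - 1 := by have := (π.symm l).isLt; omega
  have hmem : ∀ (i : Fin n) (t : ℕ), i ∈ remainingAfter π t ↔ t ≤ (π.symm i : ℕ) := by
    intro i t; simp [remainingAfter]
  have hmem' : ∀ (t s : ℕ) (h : t < n), π ⟨t, h⟩ ∈ remainingAfter π s ↔ s ≤ t := by
    intro t s h; rw [hmem]; simp
  -- beats facts
  have hlz : T.beats l z := (hT l z).mpr (Or.inr ⟨hl, hz⟩)
  have hnot_zl : ¬ T.beats z l := by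
    rw [hT]; rintro (⟨-, h⟩ | ⟨h, -⟩)
    · exact h ⟨hz, hl⟩
    · omega
  have hz_beats : ∀ m : Fin n, m ≠ z → m ≠ l → T.beats z m := by
    intro m h1 h2
    have hm1 : m.1 ≠ 0 := fun h => h1 (Fin.ext (by omega))
    have hm2 : m.1 ≠ n - 1 := fun h => h2 (Fin.ext (by omega))
    rw [hT]; left; omega
  have hl_not_beats : ∀ m : Fin n, m ≠ z → ¬ T.beats l m := by
    intro m h1
    have hm1 : m.1 ≠ 0 := fun h => h1 (Fin.ext (by omega))
    have := m.isLt
    rw [hT]; omega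
  have hmid_not_beats_z : ∀ v : Fin n, v ≠ l → ¬ T.beats v z := by
    intro v h1
    have hv : v.1 ≠ n - 1 := fun h => h1 (Fin.ext (by omega))
    rw [hT]; omega
  -- uniqueness
  have huniq : ∀ (S : Finset (Fin n)) (v w : Fin n),
      IsCondorcetIn T S v → IsCondorcetIn T S w → v = w := by
    intro S v w hv hw
    by_contra hne
    exact ((T.total v w hne).mp (hv.2 w hw.1 (Ne.symm hne))) (hw.2 v hv.1 hne)
  -- no CW when S contains z, l and a third element
  have hnoCW : ∀ S : Finset (Fin n), z ∈ S → l ∈ S →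
      (∃ m ∈ S, m ≠ z ∧ m ≠ l) → ¬ ∃ v, IsCondorcetIn T S v := by
    rintro S hzS hlS ⟨m, hmS, hm1, hm2⟩ ⟨v, hvS, hvb⟩
    by_cases h1 : v = z
    · subst h1; exact hnot_zl (hvb l hlS (Ne.symm hzl))
    · by_cases h2 : v = l
      · subst h2; exact hl_not_beats m hm1 (hvb m hmS hm2)
      · exact hmid_not_beats_z v h2 (hvb z hzS (Ne.symm h1))
  -- third element
  have hthird : ∀ s : ℕ, s + 2 ≤ n - 1 → ∃ m ∈ remainingAfter π s, m ≠ z ∧ m ≠ l := by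
    intro s hs
    by_contra hcon
    push_neg at hcon
    have hlt0 : s < n := by omega
    have hlt1 : s + 1 < n := by omega
    have hlt2 : s + 2 < n := by omega
    have k0 : π ⟨s, hlt0⟩ = z ∨ π ⟨s, hlt0⟩ = l := by
      by_cases h : π ⟨s, hlt0⟩ = z
      · exact Or.inl h
      · exact Or.inr (hcon _ ((hmem' _ _ _).mpr (by omega)) h)
    have k1 : π ⟨s+1, hlt1⟩ = z ∨ π ⟨s+1, hlt1⟩ = l := by
      by_cases h : π ⟨s+1, hlt1⟩ = z
      · exact Or.inl h
      · exact Or.inr (hcon _ ((hmem' _ _ _).mpr (by omega)) h)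
    have k2 : π ⟨s+2, hlt2⟩ = z ∨ π ⟨s+2, hlt2⟩ = l := by
      by_cases h : π ⟨s+2, hlt2⟩ = z
      · exact Or.inl h
      · exact Or.inr (hcon _ ((hmem' _ _ _).mpr (by omega)) h)
    have d01 : π ⟨s, hlt0⟩ ≠ π ⟨s+1, hlt1⟩ := fun h => by
      have := π.injective h; simp only [Fin.mk.injEq] at this; omega
    have d02 : π ⟨s, hlt0⟩ ≠ π ⟨s+2, hlt2⟩ := fun h => by
      have := π.injective h; simp only [Fin.mk.injEq] at this; omega
    have d12 : π ⟨s+1, hlt1⟩ ≠ π ⟨s+2, hlt2⟩ := fun h => by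
      have := π.injective h; simp only [Fin.mk.injEq] at this; omega
    rcases k0 with k0 | k0 <;> rcases k1 with k1 | k1 <;> rcases k2 with k2 | k2 <;>
      first
        | exact d01 (k0.trans k1.symm)
        | exact d02 (k0.trans k2.symm)
        | exact d12 (k1.trans k2.symm)
  -- master
  have hmaster : ∀ (t : ℕ) (w : Fin n),
      (∀ s < t, ¬ ∃ v, IsCondorcetIn T (remainingAfter π s) v) →
      IsCondorcetIn T (remainingAfter π t) w →
      ∀ w', (ICRWins T π w' ↔ w' = w) := by
    intro t w hfirst hcw w'
    constructor
    · rintro ⟨t', hcw', hfirst'⟩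
      rcases lt_trichotomy t' t with h | h | h
      · exact absurd ⟨w', hcw'⟩ (hfirst t' h)
      · exact huniq _ _ _ (h ▸ hcw') hcw
      · exact absurd ⟨w, hcw⟩ (hfirst' t h)
    · rintro rfl; exact ⟨t, hcw, hfirst⟩
  have hfirst_of : ∀ t : ℕ, t ≤ a + 1 → t ≤ b + 1 → t ≤ n - 2 →
      ∀ s < t, ¬ ∃ v, IsCondorcetIn T (remainingAfter π s) v := by
    intro t h1 h2 h3 s hs
    exact hnoCW _ ((hmem _ _).mpr (by omega)) ((hmem _ _).mpr (by omega))
      (hthird s (by omega))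
  rcases (show (b < a ∧ b + 3 ≤ n) ∨ (n - 2 ≤ a ∧ n - 2 ≤ b) ∨ (a < b ∧ a + 3 ≤ n)
      by omega) with ⟨h1, h2⟩ | ⟨h1, h2⟩ | ⟨h1, h2⟩
  · -- superman wins
    have hcw : IsCondorcetIn T (remainingAfter π (b+1)) z := by
      refine ⟨(hmem _ _).mpr (by omega), ?_⟩
      intro j hj hjz
      refine hz_beats j hjz (fun hjl => ?_)
      rw [hjl, hmem] at hj; omega
    have H := hmaster (b+1) z (hfirst_of _ (by omega) (by omega) (by omega)) hcw
    constructor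
    · rw [H z]; exact iff_of_true rfl ⟨h1, h2⟩
    · rw [H l]; exact iff_of_false (Ne.symm hzl) (by omega)
  · -- kryptonite wins
    have hcw : IsCondorcetIn T (remainingAfter π (n-2)) l := by
      refine ⟨(hmem _ _).mpr (by omega), ?_⟩
      intro j hj hjl
      have hjz : j = z := by
        rw [hmem] at hj
        have hjv := (π.symm j).isLt
        have hor : (π.symm j : ℕ) = a ∨ (π.symm j : ℕ) = b := by omega
        rcases hor with h | h
        · exact π.symm.injective (Fin.ext h)
        · exact absurd (π.symm.injective (Fin.ext h)) hjl
      rw [hjz]; exact hlz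
    have H := hmaster (n-2) l (hfirst_of _ (by omega) (by omega) (by omega)) hcw
    constructor
    · rw [H z]; exact iff_of_false hzl (by omega)
    · rw [H l]; exact iff_of_true rfl ⟨h1, h2⟩
  · -- a middle agent wins
    have hlt1 : a + 1 < n := by omega
    have hlt2 : a + 2 < n := by omega
    have hne : (remainingAfter π (a+1)).Nonempty :=
      ⟨π ⟨a+1, hlt1⟩, (hmem' _ _ _).mpr le_rfl⟩
    set w : Fin n := (remainingAfter π (a+1)).min' hne with hw'
    have hwS : w ∈ remainingAfter π (a+1) := Finset.min'_mem _ hne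
    have hwz : w ≠ z := by
      intro h; rw [h, hmem] at hwS; omega
    have hcw : IsCondorcetIn T (remainingAfter π (a+1)) w := by
      refine ⟨hwS, ?_⟩
      intro j hj hjw
      have hle : (w : ℕ) ≤ (j : ℕ) := Fin.le_def.mp (Finset.min'_le _ j hj)
      have hlt : (w : ℕ) < (j : ℕ) := lt_of_le_of_ne hle (fun hh => hjw (Fin.ext hh).symm)
      rw [hT]; left
      refine ⟨hlt, ?_⟩
      rintro ⟨hw0, -⟩
      exact hwz (Fin.ext (by omega))
    have hwl : w ≠ l := by
      have he1 : π ⟨a+1, hlt1⟩ ∈ remainingAfter π (a+1) := (hmem' _ _ _).mpr le_rfl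
      have he2 : π ⟨a+2, hlt2⟩ ∈ remainingAfter π (a+2-1) := by
        rw [hmem']; omega
      have he2' : π ⟨a+2, hlt2⟩ ∈ remainingAfter π (a+1) := by
        rw [hmem'] ; omega
      have d12 : π ⟨a+1, hlt1⟩ ≠ π ⟨a+2, hlt2⟩ := fun h => by
        have := π.injective h; simp only [Fin.mk.injEq] at this; omega
      obtain ⟨m, hmS, hml⟩ : ∃ m ∈ remainingAfter π (a+1), m ≠ l := by
        by_cases h : π ⟨a+1, hlt1⟩ = l
        · exact ⟨π ⟨a+2, hlt2⟩, he2', fun hh => d12 (h.trans hh.symm)⟩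
        · exact ⟨π ⟨a+1, hlt1⟩, he1, h⟩
      intro h
      have hlem : (w : ℕ) ≤ (m : ℕ) := Fin.le_def.mp (Finset.min'_le _ m hmS)
      have hmlt := m.isLt
      have : m.1 = n - 1 := by rw [h] at hlem; omega
      exact hml (Fin.ext (by omega))
    have H := hmaster (a+1) w (hfirst_of _ (by omega) (by omega) (by omega)) hcw
    constructor
    · rw [H z]; exact iff_of_false (fun h => hwz h.symm) (by omega)
    · rw [H l]; exact iff_of_false (fun h => hwl h.symm) (by omega)


end SKAux

/-- In the superman-kryptonite tournament on `n` agents, under ICR the superman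
(agent `0`) wins with probability `1/2 - 1/(n(n-1))` and the kryptonite
(agent `n-1`) wins with probability `2/(n(n-1))`. -/
theorem stmt11 {n : ℕ} (hn : 3 ≤ n) (T : Tournament n)
    (hT : ∀ i j : Fin n, T.beats i j ↔
      ((i.1 < j.1 ∧ ¬(i.1 = 0 ∧ j.1 = n - 1)) ∨ (i.1 = n - 1 ∧ j.1 = 0))) :
    ((Finset.univ.filter fun π : Equiv.Perm (Fin n) =>
        ICRWins T π ⟨0, by omega⟩).card : ℝ) / n.factorial
      = 1 / 2 - 1 / (n * (n - 1)) ∧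
    ((Finset.univ.filter fun π : Equiv.Perm (Fin n) =>
        ICRWins T π ⟨n - 1, by omega⟩).card : ℝ) / n.factorial
      = 2 / (n * (n - 1)) := by
  have e1 : (Finset.univ.filter fun π : Equiv.Perm (Fin n) => ICRWins T π ⟨0, by omega⟩)
      = Finset.univ.filter fun π : Equiv.Perm (Fin n) =>
          ((π.symm ⟨n-1, by omega⟩ : ℕ) < (π.symm ⟨0, by omega⟩ : ℕ) ∧
            (π.symm ⟨n-1, by omega⟩ : ℕ) + 3 ≤ n) :=
    filter_congr fun π _ =>
      (icr_char hn T hT ⟨0, by omega⟩ ⟨n-1, by omega⟩ rfl rfl π).1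
  have e2 : (Finset.univ.filter fun π : Equiv.Perm (Fin n) => ICRWins T π ⟨n-1, by omega⟩)
      = Finset.univ.filter fun π : Equiv.Perm (Fin n) =>
          (n - 2 ≤ (π.symm ⟨0, by omega⟩ : ℕ) ∧ n - 2 ≤ (π.symm ⟨n-1, by omega⟩ : ℕ)) :=
    filter_congr fun π _ =>
      (icr_char hn T hT ⟨0, by omega⟩ ⟨n-1, by omega⟩ rfl rfl π).2
  obtain ⟨hc1, hc2⟩ := count_main hn (⟨0, by omega⟩ : Fin n) ⟨n-1, by omega⟩ rfl rfl
  rw [e1, e2, hc2]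
  set C : ℕ := (Finset.univ.filter fun π : Equiv.Perm (Fin n) =>
          ((π.symm ⟨n-1, by omega⟩ : ℕ) < (π.symm ⟨0, by omega⟩ : ℕ) ∧
            (π.symm ⟨n-1, by omega⟩ : ℕ) + 3 ≤ n)).card with hC
  obtain ⟨m, rfl⟩ : ∃ m, n = m + 3 := ⟨n - 3, by omega⟩
  have hfact : (m+3).factorial = (m+3) * (m+2) * (m+1).factorial := by
    rw [show m+3 = (m+2)+1 from rfl, Nat.factorial_succ, Nat.factorial_succ]; ring
  have hm32 : m + 3 - 2 = m + 1 := rfl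
  rw [hm32] at hc1 ⊢
  have hFpos : (0:ℝ) < ((m+1).factorial : ℝ) := by positivity
  have hc1R : 2 * (C : ℝ) + 2 * ((m+1).factorial : ℝ)
      = ((m:ℝ)+3) * ((m:ℝ)+2) * ((m+1).factorial : ℝ) := by
    have := congrArg (fun k : ℕ => (k : ℝ)) hc1
    push_cast at this
    rw [this, hfact]; push_cast; ring
  have hfR : (((m+3).factorial : ℕ) : ℝ) = ((m:ℝ)+3) * ((m:ℝ)+2) * ((m+1).factorial : ℝ) := by
    rw [hfact]; push_cast; ring
  constructor
  · rw [hfR]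
    push_cast
    rw [show ((m:ℝ)+3) - 1 = (m:ℝ)+2 by ring]
    field_simp
    nlinarith [hc1R]
  · rw [hfR]
    push_cast
    rw [show ((m:ℝ)+3) - 1 = (m:ℝ)+2 by ring]
    field_simp
end

section
/- In the superman-kryptonite tournament on n agents, under the Top Cycle Rule each agent wins with probability 1/n; consequently, if the Top Cycle Rule is 2-NM_λ-α, then λ ≥ (1 − α)·n − 2. -/
open Classical Finset

/-- A nonempty set of agents all of whose members beat everyone outside. -/
def Dominant {n : ℕ} (T : Tournament n) (S : Finset (Fin n)) : Prop :=
  S.Nonempty ∧ ∀ i ∈ S, ∀ j ∉ S, T.beats i j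

/-- The top cycle: the minimal (least) nonempty dominant set. -/
def IsTopCycle {n : ℕ} (T : Tournament n) (S : Finset (Fin n)) : Prop :=
  Dominant T S ∧ ∀ S', Dominant T S' → S ⊆ S'
/-- If `r` is the Top Cycle Rule (a uniformly random member of the top cycle
wins), then in the superman-kryptonite tournament on `n` agents every agent wins
with probability `1/n`; consequently, if the rule is 2-NM_λ-α then
`λ ≥ (1 - α)n - 2`. -/
theorem stmt12 {n : ℕ} (hn : 3 ≤ n) (r : Tournament n → Fin n → ℝ)
    (hr : ∀ T S, IsTopCycle T S → ∀ i, r T i = if i ∈ S then ((S.card : ℝ))⁻¹ else 0)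
    (T : Tournament n)
    (hT : ∀ i j : Fin n, T.beats i j ↔
      ((i.1 < j.1 ∧ ¬(i.1 = 0 ∧ j.1 = n - 1)) ∨ (i.1 = n - 1 ∧ j.1 = 0))) :
    (∀ i, r T i = (n : ℝ)⁻¹) ∧
      ∀ lam alpha : ℝ, TwoNM lam alpha r → (1 - alpha) * n - 2 ≤ lam := by
  have hnpos : 0 < n := by omega
  have i0 : Fin n := ⟨0, by omega⟩
  -- we redefine explicitly to keep .val defeq
  clear i0
  let i0 : Fin n := ⟨0, by omega⟩
  let iN : Fin n := ⟨n - 1, by omega⟩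
  have hv0 : i0.1 = 0 := rfl
  have hvN : iN.1 = n - 1 := rfl
  -- top cycle of T is univ
  have hTC : IsTopCycle T (univ : Finset (Fin n)) := by
    constructor
    · exact ⟨⟨i0, mem_univ _⟩, fun i _ j hj => absurd (mem_univ j) hj⟩
    · intro S' hS' x _
      obtain ⟨⟨w, hw⟩, hdom⟩ := hS'
      by_cases h0 : i0 ∈ S'
      · have hN : iN ∈ S' := by
          by_contra hN
          have h := (hT i0 iN).mp (hdom i0 h0 iN hN)
          rw [hv0, hvN] at h
          omega
        by_contra hx
        have h := (hT iN x).mp (hdom iN hN x hx)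
        rw [hvN] at h
        have hx2 := x.2
        have hx0 : x = i0 := Fin.ext (by omega)
        rw [hx0] at hx; exact hx h0
      · have hw0 := (hT w i0).mp (hdom w hw i0 h0)
        rw [hv0] at hw0
        have hwN : w.1 = n - 1 := by omega
        have h1 : (⟨1, by omega⟩ : Fin n) ∉ S' := by
          intro h1
          have h := (hT ⟨1, by omega⟩ i0).mp (hdom _ h1 i0 h0)
          rw [hv0] at h
          simp only [] at h
          omega
        have h := (hT w ⟨1, by omega⟩).mp (hdom w hw _ h1)
        rw [hwN] at h
        simp only [] at h
        omega
  have hrT : ∀ i, r T i = (n : ℝ)⁻¹ := by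
    intro i
    rw [hr T univ hTC i]
    simp [Finset.card_univ]
  refine ⟨hrT, ?_⟩
  intro lam alpha h2nm
  -- the modified tournament (fully transitive)
  let T' : Tournament n :=
    { beats := fun a b => a.1 < b.1
      irrefl := fun i => lt_irrefl _
      total := fun i j hij => by
        have h : i.1 ≠ j.1 := fun h => hij (Fin.ext h)
        constructor <;> intro <;> omega }
  have hT'beats : ∀ a b : Fin n, T'.beats a b ↔ a.1 < b.1 := fun _ _ => Iff.rfl
  have hTC' : IsTopCycle T' ({i0} : Finset (Fin n)) := by
    constructor
    · refine ⟨⟨i0, mem_singleton_self _⟩, fun i hi j hj => ?_⟩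
      have hii : i = i0 := mem_singleton.mp hi
      subst hii
      have hjne : j.1 ≠ 0 := by
        intro h
        exact hj (mem_singleton.mpr (Fin.ext (by rw [h, hv0])))
      show i0.1 < j.1
      omega
    · intro S' hS'
      obtain ⟨⟨w, hw⟩, hdom⟩ := hS'
      rw [singleton_subset_iff]
      by_contra h0
      have h := hdom w hw i0 h0
      rw [hT'beats, hv0] at h
      omega
  have hne : i0 ≠ iN := by
    intro h
    have := congrArg Fin.val h
    rw [hv0, hvN] at this
    omega
  have hAdj : Adjacent i0 iN T T' := by
    intro a b hab
    rw [hT, hT'beats]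
    simp only [not_or, not_and, Fin.ext_iff, hv0, hvN] at hab
    have ha2 := a.2
    have hb2 := b.2
    omega
  have hTne : T ≠ T' := by
    intro h
    have h1 : T.beats iN i0 := (hT iN i0).mpr (Or.inr ⟨hvN, hv0⟩)
    rw [h, hT'beats, hvN, hv0] at h1
    omega
  have hr1 : r T' i0 = 1 := by
    rw [hr T' {i0} hTC' i0]
    simp
  have hrN : r T' iN = 0 := by
    rw [hr T' {i0} hTC' iN]
    simp [hne.symm]
  have key := h2nm i0 iN T T' hne hAdj hTne
  rw [hrT, hrT, hr1, hrN] at key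
  have hmax : max ((n : ℝ)⁻¹ - 1) ((n : ℝ)⁻¹ - 0) = (n : ℝ)⁻¹ := by
    rw [max_eq_right (by linarith), sub_zero]
  rw [hmax] at key
  have hn' : (0 : ℝ) < n := by exact_mod_cast hnpos
  have hinv : (n : ℝ)⁻¹ * n = 1 := inv_mul_cancel₀ (ne_of_gt hn')
  have key2 : (1 + 0) * (n : ℝ) ≤ 2 + lam + alpha * n := by
    calc (1 + 0) * (n : ℝ) ≤ ((n : ℝ)⁻¹ + (n : ℝ)⁻¹ + lam * (n : ℝ)⁻¹ + alpha) * n :=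
          mul_le_mul_of_nonneg_right key hn'.le
      _ = 2 + lam + alpha * n := by field_simp; ring
  linarith
end

section
/- In the 4-agent superman-kryptonite tournament, the PageRank tournament rule assigns probabilities (4/13, 3/13, 2/13, 4/13) to agents 1, 2, 3, 4. Moreover, if agents 1 and 3 reverse their match, the resulting tournament is a rotation of the original, with PageRank probabilities (4/13, 4/13, 3/13, 2/13), so agent 3 gains 1/13 while agent 1's probability is unchanged. -/
/-- PageRank probabilities in the 4-agent superman-kryptonite tournament
`1≻2, 1≻3, 2≻3, 2≻4, 3≻4, 4≻1` (variables `a, b, c, d` for agents `1,2,3,4`),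
and in the tournament obtained when agents 1 and 3 reverse their match
(variables `a', b', c', d'`), which is a rotation of the original.  Each system
is the defining linear system of the PageRank rule (each agent splits her
probability equally among the agents that beat her).  The solutions are
`(4/13, 3/13, 2/13, 4/13)` and `(4/13, 4/13, 3/13, 2/13)` respectively, so
agent 3 gains `1/13` while agent 1's probability is unchanged. -/
theorem stmt14 (a b c d a' b' c' d' : ℝ)
    (h1 : a = b + c / 2) (h2 : b = c / 2 + d / 2) (h3 : c = d / 2) (h4 : d = a)
    (h5 : a + b + c + d = 1)
    (h1' : a' = b') (h2' : b' = c' + d' / 2) (h3' : c' = a' / 2 + d' / 2)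
    (h4' : d' = a' / 2) (h5' : a' + b' + c' + d' = 1) :
    (a = 4 / 13 ∧ b = 3 / 13 ∧ c = 2 / 13 ∧ d = 4 / 13) ∧
    (a' = 4 / 13 ∧ b' = 4 / 13 ∧ c' = 3 / 13 ∧ d' = 2 / 13) ∧
    c' - c = 1 / 13 ∧ a' = a := by
  constructorm* _∧_ <;> linarith
end

section
/- Let n = 2^h and let T be the superman-kryptonite tournament on n agents. For every m ≥ h + 1, the RSEB winning probability of the kryptonite in a tournament on 2^m agents containing T as a dominant sub-tournament satisfies the recurrence p_m = (2 / C(2^m, 2^{m−1})) · [C(2^m − n, 2^{m−1} − 1) + C(2^m − n, 2^{m−1} − n) · p_{m−1}], with p_h = 0. -/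
open Classical Finset

/-- The winner of a single-elimination bracket of height `h` with seeding `σ`
(leaf `k` holds agent `σ k`), played according to tournament `T`. -/
noncomputable def bracketWinner {n : ℕ} (T : Tournament n) :
    (h : ℕ) → (Fin (2 ^ h) → Fin n) → Fin n
  | 0, σ => σ ⟨0, Nat.two_pow_pos 0⟩
  | h + 1, σ =>
    let a := bracketWinner T h (fun k => σ ⟨k.1, by
      have := k.2; simp only [pow_succ] at *; omega⟩)
    let b := bracketWinner T h (fun k => σ ⟨2 ^ h + k.1, by
      have := k.2; simp only [pow_succ] at *; omega⟩)
    if T.beats a b then a else b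
namespace SK15

def leftF {β : Type*} {t : ℕ} (g : Fin (2 ^ (t+1)) → β) : Fin (2 ^ t) → β :=
  fun k => g ⟨k.1, by have := k.2; simp only [pow_succ] at *; omega⟩

def rightF {β : Type*} {t : ℕ} (g : Fin (2 ^ (t+1)) → β) : Fin (2 ^ t) → β :=
  fun k => g ⟨2 ^ t + k.1, by have := k.2; simp only [pow_succ] at *; omega⟩

lemma bracketWinner_succ {n : ℕ} (T : Tournament n) (t : ℕ) (g : Fin (2 ^ (t+1)) → Fin n) :
    bracketWinner T (t+1) g =
      if T.beats (bracketWinner T t (leftF g)) (bracketWinner T t (rightF g))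
      then bracketWinner T t (leftF g) else bracketWinner T t (rightF g) := rfl

lemma pow_succ_fact (t : ℕ) : (2:ℕ) ^ (t+1) = 2 ^ t + 2 ^ t := by ring

lemma image_leftF_subset {β : Type*} [DecidableEq β] {t : ℕ} (g : Fin (2 ^ (t+1)) → β) :
    univ.image (leftF g) ⊆ univ.image g := by
  intro x hx
  simp only [mem_image, mem_univ, true_and] at hx ⊢
  obtain ⟨k, rfl⟩ := hx
  exact ⟨_, rfl⟩

lemma image_rightF_subset {β : Type*} [DecidableEq β] {t : ℕ} (g : Fin (2 ^ (t+1)) → β) :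
    univ.image (rightF g) ⊆ univ.image g := by
  intro x hx
  simp only [mem_image, mem_univ, true_and] at hx ⊢
  obtain ⟨k, rfl⟩ := hx
  exact ⟨_, rfl⟩

lemma image_eq_union {β : Type*} [DecidableEq β] {t : ℕ} (g : Fin (2 ^ (t+1)) → β) :
    univ.image g = univ.image (leftF g) ∪ univ.image (rightF g) := by
  apply Finset.Subset.antisymm
  · intro x hx
    simp only [mem_image, mem_univ, true_and] at hx
    obtain ⟨i, rfl⟩ := hx
    rcases lt_or_ge i.1 (2 ^ t) with hc | hc
    · apply Finset.mem_union_left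
      simp only [mem_image, mem_univ, true_and]
      exact ⟨⟨i.1, hc⟩, by simp [leftF]⟩
    · apply Finset.mem_union_right
      simp only [mem_image, mem_univ, true_and]
      have h2 := i.2
      have hp := pow_succ_fact t
      refine ⟨⟨i.1 - 2 ^ t, by omega⟩, ?_⟩
      simp only [rightF]
      congr 1
      exact Fin.ext (by simp; omega)
  · exact Finset.union_subset (image_leftF_subset g) (image_rightF_subset g)

lemma injective_leftF {β : Type*} {t : ℕ} {g : Fin (2 ^ (t+1)) → β}
    (hg : Function.Injective g) : Function.Injective (leftF g) := by
  intro i j hij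
  have := congrArg Fin.val (hg hij)
  simp only at this
  exact Fin.ext this

lemma injective_rightF {β : Type*} {t : ℕ} {g : Fin (2 ^ (t+1)) → β}
    (hg : Function.Injective g) : Function.Injective (rightF g) := by
  intro i j hij
  have := congrArg Fin.val (hg hij)
  simp only at this
  exact Fin.ext (by omega)

lemma disj_images {β : Type*} [DecidableEq β] {t : ℕ} {g : Fin (2 ^ (t+1)) → β}
    (hg : Function.Injective g) :
    Disjoint (univ.image (leftF g)) (univ.image (rightF g)) := by
  rw [Finset.disjoint_left]
  intro x hx hx'
  simp only [mem_image, mem_univ, true_and] at hx hx'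
  obtain ⟨i, hi⟩ := hx
  obtain ⟨j, hj⟩ := hx'
  have : leftF g i = rightF g j := hi.trans hj.symm
  have := congrArg Fin.val (hg this)
  simp only at this
  omega

def halfSwapFun (t : ℕ) (i : Fin (2 ^ (t+1))) : Fin (2 ^ (t+1)) :=
  ⟨if i.1 < 2 ^ t then i.1 + 2 ^ t else i.1 - 2 ^ t, by
    have := i.2; rw [pow_succ_fact] at *; split <;> omega⟩

lemma halfSwap_invol (t : ℕ) : Function.Involutive (halfSwapFun t) := by
  intro i
  have h2 := i.2
  have hp := pow_succ_fact t
  apply Fin.ext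
  simp only [halfSwapFun]
  split <;> split <;> omega

noncomputable def halfSwap (t : ℕ) : Equiv.Perm (Fin (2 ^ (t+1))) :=
  (halfSwap_invol t).toPerm

lemma halfSwap_apply (t : ℕ) (i : Fin (2 ^ (t+1))) : halfSwap t i = halfSwapFun t i := rfl

lemma leftF_comp_swap {β : Type*} {t : ℕ} (g : Fin (2 ^ (t+1)) → β) :
    leftF (g ∘ halfSwap t) = rightF g := by
  funext k
  simp only [leftF, rightF, Function.comp, halfSwap, Function.Involutive.toPerm,
    Equiv.coe_fn_mk, halfSwapFun]
  congr 1
  exact Fin.ext (by simp [k.2, Nat.add_comm])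

lemma rightF_comp_swap {β : Type*} {t : ℕ} (g : Fin (2 ^ (t+1)) → β) :
    rightF (g ∘ halfSwap t) = leftF g := by
  funext k
  simp only [leftF, rightF, Function.comp, halfSwap, Function.Involutive.toPerm,
    Equiv.coe_fn_mk, halfSwapFun]
  congr 1
  apply Fin.ext
  simp only
  have : ¬ (2 ^ t + k.1 < 2 ^ t) := by omega
  rw [if_neg this]
  omega

lemma image_comp_swap {β : Type*} [DecidableEq β] {t : ℕ} (g : Fin (2 ^ (t+1)) → β) :
    univ.image (g ∘ halfSwap t) = univ.image g := by
  ext x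
  simp only [mem_image, mem_univ, true_and, Function.comp]
  constructor
  · rintro ⟨i, rfl⟩; exact ⟨_, rfl⟩
  · rintro ⟨i, rfl⟩
    refine ⟨halfSwap t i, ?_⟩
    rw [halfSwap_apply, halfSwap_apply]
    exact congrArg g (halfSwap_invol t i)

end SK15

namespace SK15

section Struct

variable {h m : ℕ} (Tm : Tournament (2 ^ m))

lemma two_pow_ge4 (hh : 2 ≤ h) : 4 ≤ 2 ^ h := by
  calc (4:ℕ) = 2 ^ 2 := rfl
  _ ≤ 2 ^ h := Nat.pow_le_pow_right (by norm_num) hh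

section Beats

variable (hSK : ∀ i j : Fin (2 ^ m), i.1 < 2 ^ h → j.1 < 2 ^ h →
      (Tm.beats i j ↔
        ((i.1 < j.1 ∧ ¬(i.1 = 0 ∧ j.1 = 2 ^ h - 1)) ∨ (i.1 = 2 ^ h - 1 ∧ j.1 = 0))))
    (hdum : ∀ i j : Fin (2 ^ m), i.1 < 2 ^ h → 2 ^ h ≤ j.1 → Tm.beats i j)
    (hh : 2 ≤ h)

include hSK hdum hh

lemma beats_K_cases {x y : Fin (2 ^ m)} (hx : x.1 = 2 ^ h - 1) (hb : Tm.beats x y) :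
    y.1 = 0 ∨ 2 ^ h ≤ y.1 := by
  have h4 := two_pow_ge4 hh
  by_cases hy : y.1 < 2 ^ h
  · rcases (hSK x y (by omega) hy).1 hb with ⟨h1, _⟩ | ⟨_, h2⟩
    · omega
    · exact Or.inl h2
  · exact Or.inr (by omega)

lemma beats_mid_cases {x y : Fin (2 ^ m)} (hy0 : 0 < y.1) (hy1 : y.1 < 2 ^ h - 1)
    (hb : Tm.beats x y) : x.1 < y.1 := by
  have h4 := two_pow_ge4 hh
  by_cases hx : x.1 < 2 ^ h
  · rcases (hSK x y hx (by omega)).1 hb with ⟨h1, _⟩ | ⟨_, h2⟩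
    · exact h1
    · omega
  · exfalso
    have hby : Tm.beats y x := hdum y x (by omega) (by omega)
    have hne : y ≠ x := fun e => by rw [e] at hy1; omega
    exact ((Tm.total y x hne).1 hby) hb

lemma beats_zero_all {x y : Fin (2 ^ m)} (hx : x.1 = 0) (hy : y.1 ≠ 2 ^ h - 1)
    (hxy : x ≠ y) : Tm.beats x y := by
  have h4 := two_pow_ge4 hh
  by_cases hyr : y.1 < 2 ^ h
  · have hy0 : y.1 ≠ 0 := fun e => hxy (Fin.ext (by omega))
    exact (hSK x y (by omega) hyr).2 (Or.inl ⟨by omega, by omega⟩)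
  · exact hdum x y (by omega) (by omega)

lemma beats_K_zero {x y : Fin (2 ^ m)} (hx : x.1 = 2 ^ h - 1) (hy : y.1 = 0) :
    Tm.beats x y := by
  have h4 := two_pow_ge4 hh
  exact (hSK x y (by omega) (by omega)).2 (Or.inr ⟨hx, hy⟩)

end Beats

lemma winner_mem : ∀ (t : ℕ) (g : Fin (2 ^ t) → Fin (2 ^ m)),
    bracketWinner Tm t g ∈ univ.image g
  | 0, g => mem_image_of_mem g (mem_univ _)
  | (t+1), g => by
    rw [bracketWinner_succ]
    split
    · exact image_leftF_subset g (winner_mem t (leftF g))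
    · exact image_rightF_subset g (winner_mem t (rightF g))

lemma winner_dominant : ∀ (t : ℕ) (g : Fin (2 ^ t) → Fin (2 ^ m)) (x : Fin (2 ^ m)),
    x ∈ univ.image g → (∀ y ∈ univ.image g, y ≠ x → Tm.beats x y) →
    bracketWinner Tm t g = x
  | 0, g, x, hx, _ => by
    simp only [mem_image, mem_univ, true_and] at hx
    obtain ⟨k, rfl⟩ := hx
    have hk : k = ⟨0, Nat.two_pow_pos 0⟩ := Fin.ext (by have := k.2; simp [pow_zero] at this; omega)
    show g ⟨0, Nat.two_pow_pos 0⟩ = g k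
    rw [hk]
  | (t+1), g, x, hx, hb => by
    rw [bracketWinner_succ]
    rw [image_eq_union] at hx
    have hL := image_leftF_subset (g := g)
    have hR := image_rightF_subset (g := g)
    rcases Finset.mem_union.1 hx with hxl | hxr
    · have ha : bracketWinner Tm t (leftF g) = x :=
        winner_dominant t _ x hxl (fun y hy hyx => hb y (hL hy) hyx)
      have hbmem := winner_mem Tm t (rightF g)
      by_cases hbx : bracketWinner Tm t (rightF g) = x
      · rw [ha, hbx]; split <;> rfl
      · have hxb : Tm.beats x (bracketWinner Tm t (rightF g)) := hb _ (hR hbmem) hbx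
        rw [ha, if_pos hxb]
    · have hbw : bracketWinner Tm t (rightF g) = x :=
        winner_dominant t _ x hxr (fun y hy hyx => hb y (hR hy) hyx)
      have hamem := winner_mem Tm t (leftF g)
      by_cases hax : bracketWinner Tm t (leftF g) = x
      · rw [hbw, hax]; split <;> rfl
      · have hxa : Tm.beats x (bracketWinner Tm t (leftF g)) := hb _ (hL hamem) hax
        have hnax : ¬ Tm.beats (bracketWinner Tm t (leftF g)) x :=
          fun hc => ((Tm.total _ x hax).1 hc) hxa
        rw [hbw, if_neg hnax]

section Mid

variable (hSK : ∀ i j : Fin (2 ^ m), i.1 < 2 ^ h → j.1 < 2 ^ h →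
      (Tm.beats i j ↔
        ((i.1 < j.1 ∧ ¬(i.1 = 0 ∧ j.1 = 2 ^ h - 1)) ∨ (i.1 = 2 ^ h - 1 ∧ j.1 = 0))))
    (hdum : ∀ i j : Fin (2 ^ m), i.1 < 2 ^ h → 2 ^ h ≤ j.1 → Tm.beats i j)
    (hh : 2 ≤ h)

include hSK hdum hh

lemma winner_mid : ∀ (t : ℕ) (g : Fin (2 ^ t) → Fin (2 ^ m)),
    (∃ y ∈ univ.image g, 0 < y.1 ∧ y.1 < 2 ^ h - 1) →
    (∀ y ∈ univ.image g, y.1 ≠ 0) →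
    0 < (bracketWinner Tm t g).1 ∧ (bracketWinner Tm t g).1 < 2 ^ h - 1
  | 0, g, hex, _ => by
    obtain ⟨y, hy, hmid⟩ := hex
    simp only [mem_image, mem_univ, true_and] at hy
    obtain ⟨k, rfl⟩ := hy
    have hk : k = ⟨0, Nat.two_pow_pos 0⟩ := Fin.ext (by have := k.2; simp [pow_zero] at this; omega)
    rw [hk] at hmid
    exact hmid
  | (t+1), g, hex, h0 => by
    have hL := image_leftF_subset (g := g)
    have hR := image_rightF_subset (g := g)
    obtain ⟨y, hy, hmid⟩ := hex
    rw [image_eq_union] at hy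
    rw [bracketWinner_succ]
    rcases Finset.mem_union.1 hy with hyl | hyr
    · have ha := winner_mid t (leftF g) ⟨y, hyl, hmid⟩ (fun z hz => h0 z (hL hz))
      split
      · exact ha
      · rename_i hc
        set a := bracketWinner Tm t (leftF g)
        set b := bracketWinner Tm t (rightF g)
        by_cases hba : b = a
        · rw [hba]; exact ha
        · have hb : Tm.beats b a := (Tm.total b a hba).2 hc
          have h1 := beats_mid_cases Tm hSK hdum hh ha.1 ha.2 hb
          have h2 : b.1 ≠ 0 := h0 b (hR (winner_mem Tm t (rightF g)))
          omega
    · have hbm := winner_mid t (rightF g) ⟨y, hyr, hmid⟩ (fun z hz => h0 z (hR hz))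
      split
      · rename_i hc
        set a := bracketWinner Tm t (leftF g)
        set b := bracketWinner Tm t (rightF g)
        by_cases hab : a = b
        · rw [hab]; exact hbm
        · have h1 := beats_mid_cases Tm hSK hdum hh hbm.1 hbm.2 hc
          have h2 : a.1 ≠ 0 := h0 a (hL (winner_mem Tm t (leftF g)))
          omega
      · exact hbm

end Mid

end Struct

end SK15
namespace SK15

section Char

set_option linter.unusedSectionVars false

variable {h m : ℕ} (Tm : Tournament (2 ^ m))
    (hSK : ∀ i j : Fin (2 ^ m), i.1 < 2 ^ h → j.1 < 2 ^ h →
      (Tm.beats i j ↔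
        ((i.1 < j.1 ∧ ¬(i.1 = 0 ∧ j.1 = 2 ^ h - 1)) ∨ (i.1 = 2 ^ h - 1 ∧ j.1 = 0))))
    (hdum : ∀ i j : Fin (2 ^ m), i.1 < 2 ^ h → 2 ^ h ≤ j.1 → Tm.beats i j)
    (hh : 2 ≤ h)

include hSK hdum hh

lemma zk (t : ℕ) (g : Fin (2 ^ (t+1)) → Fin (2 ^ m)) (hg : Function.Injective g)
    (hreal : ∀ y ∈ univ.image g, y.1 < 2 ^ h)
    (hw : (bracketWinner Tm (t+1) g).1 = 2 ^ h - 1) :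
    ((bracketWinner Tm t (leftF g)).1 = 2 ^ h - 1 ∧ ∃ y ∈ univ.image (rightF g), y.1 = 0) ∨
    ((bracketWinner Tm t (rightF g)).1 = 2 ^ h - 1 ∧ ∃ y ∈ univ.image (leftF g), y.1 = 0) := by
  have hL := image_leftF_subset (g := g)
  have hR := image_rightF_subset (g := g)
  have amem := winner_mem Tm t (leftF g)
  have bmem := winner_mem Tm t (rightF g)
  set a := bracketWinner Tm t (leftF g) with ha
  set b := bracketWinner Tm t (rightF g) with hb
  have hab : a ≠ b := fun e =>
    Finset.disjoint_left.1 (disj_images hg) amem (e ▸ bmem)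
  rw [bracketWinner_succ] at hw
  rw [← ha, ← hb] at hw
  by_cases hc : Tm.beats a b
  · rw [if_pos hc] at hw
    left
    refine ⟨hw, b, bmem, ?_⟩
    rcases beats_K_cases Tm hSK hdum hh hw hc with h1 | h1
    · exact h1
    · exact absurd (hreal b (hR bmem)) (by omega)
  · rw [if_neg hc] at hw
    right
    have hba : Tm.beats b a := (Tm.total b a (Ne.symm hab)).2 hc
    refine ⟨hw, a, amem, ?_⟩
    rcases beats_K_cases Tm hSK hdum hh hw hba with h1 | h1
    · exact h1
    · exact absurd (hreal a (hL amem)) (by omega)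

lemma no_win_exact (t : ℕ) (g : Fin (2 ^ (t+2)) → Fin (2 ^ m)) (hg : Function.Injective g)
    (hreal : ∀ y ∈ univ.image g, y.1 < 2 ^ h) :
    ¬ ((bracketWinner Tm (t+2) g).1 = 2 ^ h - 1) := by
  intro hw
  have hL := image_leftF_subset (g := g)
  have hR := image_rightF_subset (g := g)
  rcases zk Tm hSK hdum hh (t+1) g hg hreal hw with ⟨hKl, z, hzR, hz0⟩ | ⟨hKr, z, hzL, hz0⟩
  · have := zk Tm hSK hdum hh t (leftF g) (injective_leftF hg)
      (fun y hy => hreal y (hL hy)) hKl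
    rcases this with ⟨_, w, hwmem, hw0⟩ | ⟨_, w, hwmem, hw0⟩ <;>
    · have hwz : w = z := Fin.ext (by omega)
      have hwL : w ∈ univ.image (leftF g) := by
        first
          | exact image_rightF_subset (g := leftF g) hwmem
          | exact image_leftF_subset (g := leftF g) hwmem
      exact Finset.disjoint_left.1 (disj_images hg) hwL (hwz ▸ hzR)
  · have := zk Tm hSK hdum hh t (rightF g) (injective_rightF hg)
      (fun y hy => hreal y (hR hy)) hKr
    rcases this with ⟨_, w, hwmem, hw0⟩ | ⟨_, w, hwmem, hw0⟩ <;>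
    · have hwz : w = z := Fin.ext (by omega)
      have hwR : w ∈ univ.image (rightF g) := by
        first
          | exact image_rightF_subset (g := rightF g) hwmem
          | exact image_leftF_subset (g := rightF g) hwmem
      exact Finset.disjoint_left.1 (disj_images hg) (hwz ▸ hzL) hwR

omit hSK hdum hh in
lemma winner_comp_swap (t : ℕ) (g : Fin (2 ^ (t+1)) → Fin (2 ^ m))
    (hg : Function.Injective g) :
    bracketWinner Tm (t+1) (g ∘ halfSwap t) = bracketWinner Tm (t+1) g := by
  rw [bracketWinner_succ, bracketWinner_succ, leftF_comp_swap, rightF_comp_swap]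
  have amem := winner_mem Tm t (leftF g)
  have bmem := winner_mem Tm t (rightF g)
  set a := bracketWinner Tm t (leftF g)
  set b := bracketWinner Tm t (rightF g)
  have hab : a ≠ b := fun e =>
    Finset.disjoint_left.1 (disj_images hg) amem (e ▸ bmem)
  by_cases hc : Tm.beats a b
  · have hnc : ¬ Tm.beats b a := fun hc2 => ((Tm.total a b hab).1 hc) hc2
    rw [if_pos hc, if_neg hnc]
  · have hba : Tm.beats b a := (Tm.total b a (Ne.symm hab)).2 hc
    rw [if_neg hc, if_pos hba]

lemma winK_left (t : ℕ) (g : Fin (2 ^ (t+1)) → Fin (2 ^ m)) (hg : Function.Injective g)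
    (hALL : ∀ x : Fin (2 ^ m), x.1 < 2 ^ h → x ∈ univ.image g)
    (hkL : ∃ y ∈ univ.image (leftF g), y.1 = 2 ^ h - 1)
    (hw : (bracketWinner Tm (t+1) g).1 = 2 ^ h - 1) :
    ((∃ y ∈ univ.image (leftF g), y.1 = 2 ^ h - 1) ∧
       ∀ y ∈ univ.image (leftF g), y.1 < 2 ^ h → y.1 = 2 ^ h - 1) ∨
    ((∀ x : Fin (2 ^ m), x.1 < 2 ^ h → x ∈ univ.image (leftF g)) ∧
       (bracketWinner Tm t (leftF g)).1 = 2 ^ h - 1) := by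
  have h4 := two_pow_ge4 (h := h) hh
  have hL := image_leftF_subset (g := g)
  have hR := image_rightF_subset (g := g)
  have amem := winner_mem Tm t (leftF g)
  have bmem := winner_mem Tm t (rightF g)
  set a := bracketWinner Tm t (leftF g) with hadef
  set b := bracketWinner Tm t (rightF g) with hbdef
  have dis := disj_images (g := g) hg
  obtain ⟨k0, hk0L, hk0K⟩ := hkL
  -- step 1 : a is the kryptonite and beats b
  rw [bracketWinner_succ, ← hadef, ← hbdef] at hw
  have haK : a.1 = 2 ^ h - 1 ∧ Tm.beats a b := by
    by_cases hc : Tm.beats a b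
    · rw [if_pos hc] at hw; exact ⟨hw, hc⟩
    · rw [if_neg hc] at hw
      exfalso
      have : k0 = b := Fin.ext (by omega)
      exact Finset.disjoint_left.1 dis hk0L (this ▸ bmem)
  obtain ⟨haK, hcab⟩ := haK
  by_cases hall : ∀ x : Fin (2 ^ m), x.1 < 2 ^ h → x ∈ univ.image (leftF g)
  · exact Or.inr ⟨hall, haK⟩
  · left
    refine ⟨⟨k0, hk0L, hk0K⟩, ?_⟩
    intro y hyL hyreal
    by_contra hyK
    push_neg at hall
    obtain ⟨r, hrreal, hrL⟩ := hall
    have hrR : r ∈ univ.image (rightF g) := by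
      have := hALL r hrreal
      rw [image_eq_union] at this
      rcases Finset.mem_union.1 this with h1 | h1
      · exact absurd h1 hrL
      · exact h1
    by_cases h0L : ∃ z ∈ univ.image (leftF g), z.1 = 0
    · obtain ⟨z, hzL, hz0⟩ := h0L
      have hr0 : r.1 ≠ 0 := fun e => hrL (Fin.ext (e.trans hz0.symm) ▸ hzL)
      have hrK : r.1 ≠ 2 ^ h - 1 := fun e => hrL (Fin.ext (e.trans hk0K.symm) ▸ hk0L)
      have hbmid := winner_mid Tm hSK hdum hh t (rightF g)
        ⟨r, hrR, by omega⟩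
        (fun w hwmem hw0 => Finset.disjoint_left.1 dis
          (Fin.ext (hw0.trans hz0.symm) ▸ hzL) hwmem)
      rcases beats_K_cases Tm hSK hdum hh haK hcab with h1 | h1
      · rw [← hbdef] at hbmid; omega
      · rw [← hbdef] at hbmid
        have : b.1 < 2 ^ h := by omega
        omega
    · push_neg at h0L
      have hy0 : y.1 ≠ 0 := h0L y hyL
      have hamid := winner_mid Tm hSK hdum hh t (leftF g) ⟨y, hyL, by omega⟩ h0L
      rw [← hadef] at hamid
      omega

end Char

end SK15
namespace SK15

section CharFull

set_option linter.unusedSectionVars false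

variable {h m : ℕ} (Tm : Tournament (2 ^ m))

/-- Left half is kryptonite plus dummies. -/
def Q1 (h : ℕ) {m s : ℕ} (u : Fin s → Fin (2 ^ m)) : Prop :=
  (∃ y ∈ univ.image u, y.1 = 2 ^ h - 1) ∧
    ∀ y ∈ univ.image u, y.1 < 2 ^ h → y.1 = 2 ^ h - 1

/-- Left half contains all real agents and kryptonite wins it. -/
def Q2 (h : ℕ) {m : ℕ} (Tm : Tournament (2 ^ m)) (t : ℕ)
    (u : Fin (2 ^ t) → Fin (2 ^ m)) : Prop :=
  (∀ x : Fin (2 ^ m), x.1 < 2 ^ h → x ∈ univ.image u) ∧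
    (bracketWinner Tm t u).1 = 2 ^ h - 1

variable
    (hSK : ∀ i j : Fin (2 ^ m), i.1 < 2 ^ h → j.1 < 2 ^ h →
      (Tm.beats i j ↔
        ((i.1 < j.1 ∧ ¬(i.1 = 0 ∧ j.1 = 2 ^ h - 1)) ∨ (i.1 = 2 ^ h - 1 ∧ j.1 = 0))))
    (hdum : ∀ i j : Fin (2 ^ m), i.1 < 2 ^ h → 2 ^ h ≤ j.1 → Tm.beats i j)
    (hh : 2 ≤ h)

include hSK hdum hh

lemma winK_of_left (t : ℕ) (g : Fin (2 ^ (t+1)) → Fin (2 ^ m)) (hg : Function.Injective g)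
    (hALL : ∀ x : Fin (2 ^ m), x.1 < 2 ^ h → x ∈ univ.image g)
    (hq : Q1 h (leftF g) ∨ Q2 h Tm t (leftF g)) :
    (bracketWinner Tm (t+1) g).1 = 2 ^ h - 1 := by
  have h4 := two_pow_ge4 (h := h) hh
  have hL := image_leftF_subset (g := g)
  have hR := image_rightF_subset (g := g)
  have bmem := winner_mem Tm t (rightF g)
  have dis := disj_images (g := g) hg
  rcases hq with ⟨⟨k0, hk0L, hk0K⟩, honly⟩ | ⟨hall, haK⟩
  · -- case Q1
    have ha : bracketWinner Tm t (leftF g) = k0 := by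
      apply winner_dominant
      · exact hk0L
      · intro y hy hyne
        by_cases hyr : y.1 < 2 ^ h
        · exact absurd (Fin.ext ((honly y hy hyr).trans hk0K.symm)) hyne
        · exact hdum k0 y (by omega) (by omega)
    have hz : (⟨0, Nat.two_pow_pos m⟩ : Fin (2 ^ m)) ∈ univ.image (rightF g) := by
      have hzg := hALL ⟨0, Nat.two_pow_pos m⟩ (by simpa using Nat.two_pow_pos h)
      rw [image_eq_union] at hzg
      rcases Finset.mem_union.1 hzg with h1 | h1
      · exact absurd (honly _ h1 (by simpa using Nat.two_pow_pos h)) (by simp; omega)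
      · exact h1
    have hb : bracketWinner Tm t (rightF g) = ⟨0, Nat.two_pow_pos m⟩ := by
      apply winner_dominant
      · exact hz
      · intro y hy hyne
        apply beats_zero_all Tm hSK hdum hh rfl _ (Ne.symm hyne)
        intro hyK
        exact Finset.disjoint_left.1 dis (Fin.ext (hyK.trans hk0K.symm) ▸ hk0L) hy
    rw [bracketWinner_succ, ha, hb,
      if_pos (beats_K_zero Tm hSK hdum hh hk0K rfl)]
    exact hk0K
  · -- case Q2
    have hbd : 2 ^ h ≤ (bracketWinner Tm t (rightF g)).1 := by
      by_contra hc
      push_neg at hc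
      exact Finset.disjoint_left.1 dis (hall _ hc) bmem
    rw [bracketWinner_succ]
    rw [if_pos (hdum _ _ (by omega) hbd)]
    exact haK

lemma charK (t : ℕ) (g : Fin (2 ^ (t+1)) → Fin (2 ^ m)) (hg : Function.Injective g)
    (hALL : ∀ x : Fin (2 ^ m), x.1 < 2 ^ h → x ∈ univ.image g) :
    (bracketWinner Tm (t+1) g).1 = 2 ^ h - 1 ↔
      ((Q1 h (leftF g) ∨ Q2 h Tm t (leftF g)) ∨
        (Q1 h (rightF g) ∨ Q2 h Tm t (rightF g))) := by
  have hg' : Function.Injective (g ∘ halfSwap t) := hg.comp (Equiv.injective _)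
  have hALL' : ∀ x : Fin (2 ^ m), x.1 < 2 ^ h → x ∈ univ.image (g ∘ halfSwap t) := by
    intro x hx; rw [image_comp_swap]; exact hALL x hx
  constructor
  · intro hw
    have hKmem : bracketWinner Tm (t+1) g ∈ univ.image g := winner_mem Tm (t+1) g
    rw [image_eq_union] at hKmem
    rcases Finset.mem_union.1 hKmem with hKl | hKr
    · exact Or.inl (winK_left Tm hSK hdum hh t g hg hALL ⟨_, hKl, hw⟩ hw)
    · right
      have hw' : (bracketWinner Tm (t+1) (g ∘ halfSwap t)).1 = 2 ^ h - 1 := by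
        rw [winner_comp_swap Tm t g hg]; exact hw
      have := winK_left Tm hSK hdum hh t (g ∘ halfSwap t) hg' hALL'
        (by rw [leftF_comp_swap]; exact ⟨_, hKr, hw⟩) hw'
      rw [leftF_comp_swap] at this
      exact this
  · intro hq
    rcases hq with hq | hq
    · exact winK_of_left Tm hSK hdum hh t g hg hALL hq
    · rw [← winner_comp_swap Tm t g hg]
      apply winK_of_left Tm hSK hdum hh t (g ∘ halfSwap t) hg' hALL'
      rw [leftF_comp_swap]
      exact hq

end CharFull

end SK15
namespace SK15

section Glue

variable {β : Type*} {t : ℕ}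

def glueF (u v : Fin (2 ^ t) → β) : Fin (2 ^ (t+1)) → β :=
  fun i => if hc : i.1 < 2 ^ t then u ⟨i.1, hc⟩
    else v ⟨i.1 - 2 ^ t, by have := i.2; have hp := pow_succ_fact t; omega⟩

lemma leftF_glueF (u v : Fin (2 ^ t) → β) : leftF (glueF u v) = u := by
  funext k
  simp only [leftF, glueF, k.2, dif_pos]

lemma rightF_glueF (u v : Fin (2 ^ t) → β) : rightF (glueF u v) = v := by
  funext k
  have hk := k.2
  simp only [rightF, glueF]
  rw [dif_neg (by omega)]
  congr 1
  apply Fin.ext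
  simp

lemma glueF_eq (f : Fin (2 ^ (t+1)) → β) : glueF (leftF f) (rightF f) = f := by
  funext i
  have h2 := i.2
  have hp := pow_succ_fact t
  simp only [glueF]
  split
  · simp only [leftF]
  · simp only [rightF]
    congr 1
    apply Fin.ext
    simp
    omega

lemma glueF_inj [DecidableEq β] {u v : Fin (2 ^ t) → β}
    (hu : Function.Injective u) (hv : Function.Injective v)
    (hd : Disjoint (univ.image u) (univ.image v)) :
    Function.Injective (glueF u v) := by
  intro i j hij
  have hi2 := i.2
  have hj2 := j.2
  have hp := pow_succ_fact t
  simp only [glueF] at hij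
  split at hij <;> split at hij
  · have := congrArg Fin.val (hu hij)
    simp at this
    exact Fin.ext (by omega)
  · exact absurd (hij ▸ mem_image_of_mem u (mem_univ _))
      (Finset.disjoint_right.1 hd (mem_image_of_mem v (mem_univ _)))
  · exact absurd (hij ▸ mem_image_of_mem v (mem_univ _))
      (Finset.disjoint_left.1 hd (mem_image_of_mem u (mem_univ _)))
  · have := congrArg Fin.val (hv hij)
    simp at this
    exact Fin.ext (by omega)

lemma image_glueF [DecidableEq β] (u v : Fin (2 ^ t) → β) :
    univ.image (glueF u v) = univ.image u ∪ univ.image v := by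
  rw [image_eq_union, leftF_glueF, rightF_glueF]

end Glue

section Counting

variable {m : ℕ}

lemma card_emb_image_eq (k : ℕ) (C : Finset (Fin (2 ^ m))) (hC : C.card = k) :
    ((univ : Finset (Fin k ↪ Fin (2 ^ m))).filter fun (v : Fin k ↪ Fin (2 ^ m)) => univ.image ⇑v = C).card
      = k.factorial := by
  classical
  have hcard : Fintype.card {x // x ∈ C} = k := by rw [Fintype.card_coe, hC]
  have hfin : Fintype.card (Fin k ↪ {x // x ∈ C}) = k.factorial := by
    rw [Fintype.card_embedding_eq, hcard, Fintype.card_fin, Nat.descFactorial_self]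
  rw [← hfin, ← Finset.card_univ]
  symm
  apply Finset.card_bij (i := fun (w : Fin k ↪ {x // x ∈ C}) (_ : w ∈ univ) =>
    w.trans (Function.Embedding.subtype _))
  · intro w _
    rw [Finset.mem_filter]
    refine ⟨mem_univ _, ?_⟩
    apply Finset.eq_of_subset_of_card_le
    · intro x hx
      simp only [mem_image, mem_univ, true_and] at hx
      obtain ⟨a, rfl⟩ := hx
      exact (w a).2
    · rw [hC, Finset.card_image_of_injective _ (w.trans _).injective,
        Finset.card_univ, Fintype.card_fin]
  · intro w1 _ w2 _ he
    apply Function.Embedding.ext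
    intro x
    apply Subtype.ext
    exact congrArg (fun (e : Fin k ↪ Fin (2 ^ m)) => e x) he
  · intro v hv
    rw [Finset.mem_filter] at hv
    refine ⟨⟨fun x => ⟨v x, ?_⟩, fun x y hxy => v.injective (congrArg Subtype.val hxy)⟩,
      mem_univ _, ?_⟩
    · rw [← hv.2]
      exact mem_image_of_mem v (mem_univ x)
    · apply Function.Embedding.ext
      intro x
      rfl

lemma split_count (t : ℕ) (A : Finset (Fin (2 ^ m))) (hA : A.card = 2 ^ (t+1))
    (P : (Fin (2 ^ t) → Fin (2 ^ m)) → Prop)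
    [i1 : DecidablePred fun (f : Fin (2 ^ (t+1)) ↪ Fin (2 ^ m)) =>
      univ.image ⇑f = A ∧ P (leftF ⇑f)]
    [i2 : DecidablePred fun (u : Fin (2 ^ t) ↪ Fin (2 ^ m)) =>
      univ.image ⇑u ⊆ A ∧ P ⇑u] :
    (@Finset.filter _
        (fun (f : Fin (2 ^ (t+1)) ↪ Fin (2 ^ m)) => univ.image ⇑f = A ∧ P (leftF ⇑f)) i1
        univ).card =
      (@Finset.filter _
        (fun (u : Fin (2 ^ t) ↪ Fin (2 ^ m)) => univ.image ⇑u ⊆ A ∧ P ⇑u) i2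
        univ).card * (2 ^ t).factorial := by
  classical
  set s := (@Finset.filter _
      (fun (f : Fin (2 ^ (t+1)) ↪ Fin (2 ^ m)) => univ.image ⇑f = A ∧ P (leftF ⇑f)) i1
      univ) with hs
  set ts := (@Finset.filter _
      (fun (u : Fin (2 ^ t) ↪ Fin (2 ^ m)) => univ.image ⇑u ⊆ A ∧ P ⇑u) i2
      univ) with hts
  have key : ∀ f ∈ s, (⟨leftF ⇑f, injective_leftF f.injective⟩ : Fin (2 ^ t) ↪ Fin (2 ^ m)) ∈ ts := by
    intro f hf
    rw [hs, Finset.mem_filter] at hf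
    rw [hts, Finset.mem_filter]
    refine ⟨mem_univ _, ?_, hf.2.2⟩
    show univ.image (leftF ⇑f) ⊆ A
    rw [← hf.2.1]
    exact image_leftF_subset ⇑f
  rw [Finset.card_eq_sum_card_fiberwise key]
  have fib : ∀ u ∈ ts,
      (s.filter fun (f : Fin (2 ^ (t+1)) ↪ Fin (2 ^ m)) =>
        (⟨leftF ⇑f, injective_leftF f.injective⟩ : Fin (2 ^ t) ↪ Fin (2 ^ m)) = u).card
      = (2 ^ t).factorial := by
    intro u hu
    rw [hts, Finset.mem_filter] at hu
    obtain ⟨-, huA, huP⟩ := hu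
    have hcard : (A \ univ.image ⇑u).card = 2 ^ t := by
      rw [Finset.card_sdiff_of_subset huA, hA,
        Finset.card_image_of_injective _ u.injective, Finset.card_univ,
        Fintype.card_fin, pow_succ_fact]
      omega
    rw [← card_emb_image_eq (2 ^ t) (A \ univ.image ⇑u) hcard]
    apply Finset.card_bij (i := fun (f : Fin (2 ^ (t+1)) ↪ Fin (2 ^ m)) (_ : f ∈ _) =>
      (⟨rightF ⇑f, injective_rightF f.injective⟩ : Fin (2 ^ t) ↪ Fin (2 ^ m)))
    · intro f hf
      rw [Finset.mem_filter] at hf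
      obtain ⟨hfs, hfu⟩ := hf
      rw [hs, Finset.mem_filter] at hfs
      obtain ⟨-, hfA, -⟩ := hfs
      rw [Finset.mem_filter]
      refine ⟨mem_univ _, ?_⟩
      have hLu : leftF ⇑f = ⇑u := congrArg (fun (e : Fin (2 ^ t) ↪ Fin (2 ^ m)) => ⇑e) hfu
      show univ.image (rightF ⇑f) = A \ univ.image ⇑u
      rw [← hLu, ← hfA, image_eq_union (g := ⇑f),
        Finset.union_sdiff_cancel_left (disj_images f.injective)]
    · intro f1 hf1 f2 hf2 he
      rw [Finset.mem_filter] at hf1 hf2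
      have h1 : leftF ⇑f1 = ⇑u := congrArg (fun (e : Fin (2 ^ t) ↪ Fin (2 ^ m)) => ⇑e) hf1.2
      have h2 : leftF ⇑f2 = ⇑u := congrArg (fun (e : Fin (2 ^ t) ↪ Fin (2 ^ m)) => ⇑e) hf2.2
      have hr : rightF ⇑f1 = rightF ⇑f2 := congrArg (fun (e : Fin (2 ^ t) ↪ Fin (2 ^ m)) => ⇑e) he
      apply Function.Embedding.ext
      intro x
      have : glueF (leftF ⇑f1) (rightF ⇑f1) = glueF (leftF ⇑f2) (rightF ⇑f2) := by
        rw [h1, h2, hr]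
      rw [glueF_eq, glueF_eq] at this
      exact congrFun this x
    · intro v hv
      rw [Finset.mem_filter] at hv
      obtain ⟨-, hvim⟩ := hv
      have hdisj : Disjoint (univ.image ⇑u) (univ.image ⇑v) := by
        rw [hvim]
        exact Finset.disjoint_sdiff
      refine ⟨⟨glueF ⇑u ⇑v, glueF_inj u.injective v.injective hdisj⟩, ?_, ?_⟩
      · rw [Finset.mem_filter]
        constructor
        · rw [hs, Finset.mem_filter]
          refine ⟨mem_univ _, ?_, ?_⟩
          · show univ.image (glueF ⇑u ⇑v) = A
            rw [image_glueF, hvim, Finset.union_sdiff_of_subset huA]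
          · show P (leftF (glueF ⇑u ⇑v))
            rw [leftF_glueF]
            exact huP
        · apply Function.Embedding.ext
          intro x
          show leftF (glueF ⇑u ⇑v) x = u x
          rw [leftF_glueF]
      · apply Function.Embedding.ext
        intro x
        show rightF (glueF ⇑u ⇑v) x = v x
        rw [rightF_glueF]
  rw [Finset.sum_congr rfl fib, Finset.sum_const, smul_eq_mul]

lemma count_emb_R (k : ℕ) (A : Finset (Fin (2 ^ m))) (R : Finset (Fin (2 ^ m)) → Prop)
    [i1 : DecidablePred fun (u : Fin k ↪ Fin (2 ^ m)) =>
      univ.image ⇑u ⊆ A ∧ R (univ.image ⇑u)]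
    [i2 : DecidablePred R] :
    (@Finset.filter _
      (fun (u : Fin k ↪ Fin (2 ^ m)) => univ.image ⇑u ⊆ A ∧ R (univ.image ⇑u)) i1
      univ).card =
    (@Finset.filter _ R i2 (A.powersetCard k)).card * k.factorial := by
  classical
  set s := (@Finset.filter _
      (fun (u : Fin k ↪ Fin (2 ^ m)) => univ.image ⇑u ⊆ A ∧ R (univ.image ⇑u)) i1
      univ) with hs
  have key : ∀ u ∈ s, univ.image ⇑u ∈ @Finset.filter _ R i2 (A.powersetCard k) := by
    intro u hu
    rw [hs, Finset.mem_filter] at hu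
    rw [Finset.mem_filter]
    refine ⟨Finset.mem_powersetCard.2 ⟨hu.2.1, ?_⟩, hu.2.2⟩
    rw [Finset.card_image_of_injective _ u.injective, Finset.card_univ, Fintype.card_fin]
  rw [Finset.card_eq_sum_card_fiberwise key]
  have fib : ∀ B ∈ @Finset.filter _ R i2 (A.powersetCard k),
      (s.filter fun (u : Fin k ↪ Fin (2 ^ m)) => univ.image ⇑u = B).card = k.factorial := by
    intro B hB
    rw [Finset.mem_filter, Finset.mem_powersetCard] at hB
    obtain ⟨⟨hBA, hBk⟩, hBR⟩ := hB
    rw [← card_emb_image_eq k B hBk]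
    congr 1
    rw [hs, Finset.filter_filter]
    apply Finset.filter_congr
    intro u _
    constructor
    · exact fun he => he.2
    · intro he
      exact ⟨⟨he ▸ hBA, by rw [he]; exact hBR⟩, he⟩
  rw [Finset.sum_congr rfl fib, Finset.sum_const, smul_eq_mul]

end Counting

end SK15
namespace SK15

section PS

variable {h m : ℕ}

def realsF (h m : ℕ) : Finset (Fin (2 ^ m)) := univ.filter fun x => x.1 < 2 ^ h

lemma mem_realsF {x : Fin (2 ^ m)} : x ∈ realsF h m ↔ x.1 < 2 ^ h := by
  simp [realsF]

lemma card_realsF (hhm : h ≤ m) : (realsF h m).card = 2 ^ h := by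
  have hle : (2:ℕ) ^ h ≤ 2 ^ m := Nat.pow_le_pow_right (by norm_num) hhm
  rw [show (2:ℕ) ^ h = Finset.card (univ : Finset (Fin (2 ^ h))) by
    rw [Finset.card_univ, Fintype.card_fin]]
  refine Finset.card_bij (fun (x : Fin (2 ^ m)) (hx : x ∈ realsF h m) =>
    (⟨x.1, mem_realsF.1 hx⟩ : Fin (2 ^ h))) ?_ ?_ ?_
  · intro x hx; exact mem_univ _
  · intro x1 h1 x2 h2 he
    exact Fin.ext (by simpa using congrArg Fin.val he)
  · intro b _
    exact ⟨⟨b.1, by omega⟩, mem_realsF.2 b.2, rfl⟩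

lemma ps1 (hh : 2 ≤ h) (hhm : h ≤ m) (A : Finset (Fin (2 ^ m)))
    (hAr : ∀ x : Fin (2 ^ m), x.1 < 2 ^ h → x ∈ A) (k : ℕ) (hk : 1 ≤ k) :
    ((A.powersetCard k).filter fun B =>
        (∃ y ∈ B, y.1 = 2 ^ h - 1) ∧ ∀ y ∈ B, y.1 < 2 ^ h → y.1 = 2 ^ h - 1).card
      = (A.card - 2 ^ h).choose (k - 1) := by
  classical
  have h4 := two_pow_ge4 hh
  have hle : (2:ℕ) ^ h ≤ 2 ^ m := Nat.pow_le_pow_right (by norm_num) hhm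
  set K0 : Fin (2 ^ m) := ⟨2 ^ h - 1, by omega⟩ with hK0
  have hrA : realsF h m ⊆ A := fun x hx => hAr x (mem_realsF.1 hx)
  have hcsd : (A \ realsF h m).card = A.card - 2 ^ h := by
    rw [Finset.card_sdiff_of_subset hrA, card_realsF hhm]
  rw [← hcsd, ← Finset.card_powersetCard]
  refine Finset.card_bij' (fun B _ => B.erase K0)
    (fun B _ => insert K0 B) ?hi ?hj ?li ?ri
  case hi =>
    intro B hB
    rw [Finset.mem_filter, Finset.mem_powersetCard] at hB
    obtain ⟨⟨hBA, hBk⟩, ⟨y, hyB, hyK⟩, honly⟩ := hB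
    have hK0B : K0 ∈ B := by
      have : y = K0 := Fin.ext (by simp [hK0, hyK])
      exact this ▸ hyB
    rw [Finset.mem_powersetCard]
    constructor
    · intro x hx
      rw [Finset.mem_erase] at hx
      rw [Finset.mem_sdiff]
      refine ⟨hBA hx.2, ?_⟩
      rw [mem_realsF]
      intro hxr
      exact hx.1 (Fin.ext (by simp [hK0, honly x hx.2 hxr]))
    · rw [Finset.card_erase_of_mem hK0B, hBk]
  case hj =>
    intro B hB
    rw [Finset.mem_powersetCard] at hB
    obtain ⟨hBA, hBk⟩ := hB
    have hK0nB : K0 ∉ B := fun hc => by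
      have := hBA hc
      rw [Finset.mem_sdiff, mem_realsF] at this
      exact this.2 (by simp [hK0])
    rw [Finset.mem_filter, Finset.mem_powersetCard]
    refine ⟨⟨?_, ?_⟩, ⟨K0, Finset.mem_insert_self _ _, by simp [hK0]⟩, ?_⟩
    · intro x hx
      rcases Finset.mem_insert.1 hx with rfl | hx
      · exact hAr K0 (by simp [hK0])
      · exact (Finset.mem_sdiff.1 (hBA hx)).1
    · rw [Finset.card_insert_of_notMem hK0nB, hBk]
      omega
    · intro y hy hyr
      rcases Finset.mem_insert.1 hy with rfl | hy
      · simp [hK0]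
      · exfalso
        have := Finset.mem_sdiff.1 (hBA hy)
        rw [mem_realsF] at this
        exact this.2 hyr
  case li =>
    intro B hB
    rw [Finset.mem_filter] at hB
    obtain ⟨-, ⟨y, hyB, hyK⟩, -⟩ := hB
    have hK0B : K0 ∈ B := by
      have : y = K0 := Fin.ext (by simp [hK0, hyK])
      exact this ▸ hyB
    exact Finset.insert_erase hK0B
  case ri =>
    intro B hB
    rw [Finset.mem_powersetCard] at hB
    have hK0nB : K0 ∉ B := fun hc => by
      have := hB.1 hc
      rw [Finset.mem_sdiff, mem_realsF] at this
      exact this.2 (by simp [hK0])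
    exact Finset.erase_insert hK0nB

lemma ps2 (hh : 2 ≤ h) (hhm : h ≤ m) (A : Finset (Fin (2 ^ m)))
    (hAr : ∀ x : Fin (2 ^ m), x.1 < 2 ^ h → x ∈ A) (k : ℕ) (hk : 2 ^ h ≤ k) :
    ((A.powersetCard k).filter fun B =>
        ∀ x : Fin (2 ^ m), x.1 < 2 ^ h → x ∈ B).card
      = (A.card - 2 ^ h).choose (k - 2 ^ h) := by
  classical
  have hrA : realsF h m ⊆ A := fun x hx => hAr x (mem_realsF.1 hx)
  have hcsd : (A \ realsF h m).card = A.card - 2 ^ h := by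
    rw [Finset.card_sdiff_of_subset hrA, card_realsF hhm]
  rw [← hcsd, ← Finset.card_powersetCard]
  refine Finset.card_bij' (fun B _ => B \ realsF h m)
    (fun B _ => B ∪ realsF h m) ?hi ?hj ?li ?ri
  case hi =>
    intro B hB
    rw [Finset.mem_filter, Finset.mem_powersetCard] at hB
    obtain ⟨⟨hBA, hBk⟩, hall⟩ := hB
    have hrB : realsF h m ⊆ B := fun x hx => hall x (mem_realsF.1 hx)
    rw [Finset.mem_powersetCard]
    constructor
    · intro x hx
      rw [Finset.mem_sdiff] at hx ⊢
      exact ⟨hBA hx.1, hx.2⟩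
    · rw [Finset.card_sdiff_of_subset hrB, hBk, card_realsF hhm]
  case hj =>
    intro B hB
    rw [Finset.mem_powersetCard] at hB
    obtain ⟨hBA, hBk⟩ := hB
    have hdisj : Disjoint B (realsF h m) := by
      rw [Finset.disjoint_left]
      intro x hx hx2
      exact (Finset.mem_sdiff.1 (hBA hx)).2 hx2
    rw [Finset.mem_filter, Finset.mem_powersetCard]
    refine ⟨⟨?_, ?_⟩, ?_⟩
    · intro x hx
      rcases Finset.mem_union.1 hx with hx | hx
      · exact (Finset.mem_sdiff.1 (hBA hx)).1
      · exact hrA hx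
    · rw [Finset.card_union_of_disjoint hdisj, hBk, card_realsF hhm]
      omega
    · intro x hxr
      exact Finset.mem_union_right _ (mem_realsF.2 hxr)
  case li =>
    intro B hB
    rw [Finset.mem_filter] at hB
    have hrB : realsF h m ⊆ B := fun x hx => hB.2 x (mem_realsF.1 hx)
    exact Finset.sdiff_union_of_subset hrB
  case ri =>
    intro B hB
    rw [Finset.mem_powersetCard] at hB
    have hdisj : Disjoint B (realsF h m) := by
      rw [Finset.disjoint_left]
      intro x hx hx2
      exact (Finset.mem_sdiff.1 (hB.1 hx)).2 hx2
    exact Finset.union_sdiff_cancel_right hdisj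

lemma swap_filter_card (t : ℕ) (A : Finset (Fin (2 ^ m)))
    (P : (Fin (2 ^ t) → Fin (2 ^ m)) → Prop)
    [i1 : DecidablePred fun (f : Fin (2 ^ (t+1)) ↪ Fin (2 ^ m)) =>
      univ.image ⇑f = A ∧ P (rightF ⇑f)]
    [i2 : DecidablePred fun (f : Fin (2 ^ (t+1)) ↪ Fin (2 ^ m)) =>
      univ.image ⇑f = A ∧ P (leftF ⇑f)] :
    (@Finset.filter _
        (fun (f : Fin (2 ^ (t+1)) ↪ Fin (2 ^ m)) => univ.image ⇑f = A ∧ P (rightF ⇑f)) i1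
        univ).card =
    (@Finset.filter _
        (fun (f : Fin (2 ^ (t+1)) ↪ Fin (2 ^ m)) => univ.image ⇑f = A ∧ P (leftF ⇑f)) i2
        univ).card := by
  classical
  have hco : ∀ f : Fin (2 ^ (t+1)) ↪ Fin (2 ^ m),
      ⇑((halfSwap t).toEmbedding.trans f) = ⇑f ∘ ⇑(halfSwap t) := fun f => rfl
  have hinv : ∀ f : Fin (2 ^ (t+1)) ↪ Fin (2 ^ m),
      (halfSwap t).toEmbedding.trans ((halfSwap t).toEmbedding.trans f) = f := by
    intro f
    apply Function.Embedding.ext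
    intro x
    show f (halfSwap t (halfSwap t x)) = f x
    rw [halfSwap_apply, halfSwap_apply, halfSwap_invol t x]
  refine Finset.card_bij' (fun f _ => (halfSwap t).toEmbedding.trans f)
    (fun f _ => (halfSwap t).toEmbedding.trans f) ?hi ?hj ?li ?ri
  case hi =>
    intro f hf
    rw [Finset.mem_filter] at hf ⊢
    obtain ⟨-, hfA, hfP⟩ := hf
    refine ⟨mem_univ _, ?_, ?_⟩
    · rw [hco, image_comp_swap]; exact hfA
    · rw [hco, leftF_comp_swap]; exact hfP
  case hj =>
    intro f hf
    rw [Finset.mem_filter] at hf ⊢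
    obtain ⟨-, hfA, hfP⟩ := hf
    refine ⟨mem_univ _, ?_, ?_⟩
    · rw [hco, image_comp_swap]; exact hfA
    · rw [hco, rightF_comp_swap]; exact hfP
  case li =>
    intro f _; exact hinv f
  case ri =>
    intro f _; exact hinv f

end PS

def gcount (h : ℕ) : ℕ → ℕ
  | 0 => 0
  | t + 1 => if t + 1 ≤ h then 0 else
      2 * ((2 ^ (t+1) - 2 ^ h).choose (2 ^ t - 1)
            * ((2 ^ t).factorial * (2 ^ t).factorial)
        + (2 ^ (t+1) - 2 ^ h).choose (2 ^ t - 2 ^ h)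
            * ((2 ^ t).factorial * gcount h t))

end SK15
namespace SK15

lemma card_filter_inst {α : Type*} (s : Finset α) (p : α → Prop) (i1 i2 : DecidablePred p) :
    (@Finset.filter α p i1 s).card = (@Finset.filter α p i2 s).card := by
  have he : @Finset.filter α p i1 s = @Finset.filter α p i2 s := by
    ext a
    exact Iff.trans (@Finset.mem_filter _ p i1 s a) (@Finset.mem_filter _ p i2 s a).symm
  rw [he]

section Main

set_option linter.unusedSectionVars false
set_option maxHeartbeats 1000000

variable {h m : ℕ} (Tm : Tournament (2 ^ m))
    (hSK : ∀ i j : Fin (2 ^ m), i.1 < 2 ^ h → j.1 < 2 ^ h →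
      (Tm.beats i j ↔
        ((i.1 < j.1 ∧ ¬(i.1 = 0 ∧ j.1 = 2 ^ h - 1)) ∨ (i.1 = 2 ^ h - 1 ∧ j.1 = 0))))
    (hdum : ∀ i j : Fin (2 ^ m), i.1 < 2 ^ h → 2 ^ h ≤ j.1 → Tm.beats i j)
    (hh : 2 ≤ h) (hhm : h ≤ m)

include hSK hdum hh hhm

lemma count_main : ∀ t, h ≤ t → ∀ A : Finset (Fin (2 ^ m)), A.card = 2 ^ t →
    (∀ x : Fin (2 ^ m), x.1 < 2 ^ h → x ∈ A) →
    ((univ : Finset (Fin (2 ^ t) ↪ Fin (2 ^ m))).filter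
      fun (f : Fin (2 ^ t) ↪ Fin (2 ^ m)) =>
        univ.image ⇑f = A ∧ (bracketWinner Tm t ⇑f).1 = 2 ^ h - 1).card
      = gcount h t := by
  intro t ht
  induction t, ht using Nat.le_induction with
  | base =>
    intro A hA hAr
    obtain ⟨t0, hht0⟩ : ∃ t0, h = t0 + 2 := ⟨h - 2, by omega⟩
    subst hht0
    have hg : gcount (t0+2) (t0+2) = 0 := by simp [gcount]
    rw [hg, Finset.card_eq_zero, Finset.filter_eq_empty_iff]
    intro f _
    rintro ⟨hfA, hfK⟩
    have hAreal : ∀ y ∈ A, y.1 < 2 ^ (t0+2) := by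
      have hsub : realsF (t0+2) m ⊆ A := fun x hx => hAr x (mem_realsF.1 hx)
      have heq : realsF (t0+2) m = A :=
        Finset.eq_of_subset_of_card_le hsub (by rw [hA, card_realsF hhm])
      intro y hy
      rw [← heq] at hy
      exact mem_realsF.1 hy
    exact no_win_exact Tm hSK hdum hh t0 ⇑f f.injective
      (fun y hy => hAreal y (hfA ▸ hy)) hfK
  | succ t ht IH =>
    intro A hA hAr
    have h4 := two_pow_ge4 (h := h) hh
    have hhT : (2:ℕ) ^ h ≤ 2 ^ t := Nat.pow_le_pow_right (by norm_num) ht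
    have h1T : (1:ℕ) ≤ 2 ^ t := Nat.one_le_two_pow
    -- abbreviations for the four unfolded predicates
    have hcong : ((univ : Finset (Fin (2 ^ (t+1)) ↪ Fin (2 ^ m))).filter
        fun (f : Fin (2 ^ (t+1)) ↪ Fin (2 ^ m)) =>
          univ.image ⇑f = A ∧ (bracketWinner Tm (t+1) ⇑f).1 = 2 ^ h - 1)
      = ((univ : Finset (Fin (2 ^ (t+1)) ↪ Fin (2 ^ m))).filter
        fun (f : Fin (2 ^ (t+1)) ↪ Fin (2 ^ m)) =>
          (univ.image ⇑f = A ∧ ((∃ y ∈ univ.image (leftF ⇑f), y.1 = 2 ^ h - 1) ∧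
            ∀ y ∈ univ.image (leftF ⇑f), y.1 < 2 ^ h → y.1 = 2 ^ h - 1)) ∨
          ((univ.image ⇑f = A ∧ ((∀ x : Fin (2 ^ m), x.1 < 2 ^ h → x ∈ univ.image (leftF ⇑f)) ∧
            (bracketWinner Tm t (leftF ⇑f)).1 = 2 ^ h - 1)) ∨
          ((univ.image ⇑f = A ∧ ((∃ y ∈ univ.image (rightF ⇑f), y.1 = 2 ^ h - 1) ∧
            ∀ y ∈ univ.image (rightF ⇑f), y.1 < 2 ^ h → y.1 = 2 ^ h - 1)) ∨
          (univ.image ⇑f = A ∧ ((∀ x : Fin (2 ^ m), x.1 < 2 ^ h → x ∈ univ.image (rightF ⇑f)) ∧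
            (bracketWinner Tm t (rightF ⇑f)).1 = 2 ^ h - 1))))) := by
      apply Finset.filter_congr
      intro f _
      constructor
      · rintro ⟨hfA, hfK⟩
        have hALL : ∀ x : Fin (2 ^ m), x.1 < 2 ^ h → x ∈ univ.image ⇑f := by
          intro x hx; rw [hfA]; exact hAr x hx
        have := (charK Tm hSK hdum hh t ⇑f f.injective hALL).1 hfK
        rcases this with (q | q) | (q | q)
        · exact Or.inl ⟨hfA, q⟩
        · exact Or.inr (Or.inl ⟨hfA, q⟩)
        · exact Or.inr (Or.inr (Or.inl ⟨hfA, q⟩))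
        · exact Or.inr (Or.inr (Or.inr ⟨hfA, q⟩))
      · intro hq
        have hfA : univ.image ⇑f = A := by
          rcases hq with ⟨e, -⟩ | ⟨e, -⟩ | ⟨e, -⟩ | ⟨e, -⟩ <;> exact e
        have hALL : ∀ x : Fin (2 ^ m), x.1 < 2 ^ h → x ∈ univ.image ⇑f := by
          intro x hx; rw [hfA]; exact hAr x hx
        refine ⟨hfA, (charK Tm hSK hdum hh t ⇑f f.injective hALL).2 ?_⟩
        rcases hq with ⟨-, q⟩ | ⟨-, q⟩ | ⟨-, q⟩ | ⟨-, q⟩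
        · exact Or.inl (Or.inl q)
        · exact Or.inl (Or.inr q)
        · exact Or.inr (Or.inl q)
        · exact Or.inr (Or.inr q)
    rw [hcong, Finset.filter_or, Finset.filter_or, Finset.filter_or]
    -- incompatibility helpers
    have hz : (⟨0, Nat.two_pow_pos m⟩ : Fin (2 ^ m)).1 < 2 ^ h := by
      simpa using Nat.two_pow_pos h
    have incompat12 : ∀ (u : Fin (2 ^ t) → Fin (2 ^ m)),
        ((∃ y ∈ univ.image u, y.1 = 2 ^ h - 1) ∧
          ∀ y ∈ univ.image u, y.1 < 2 ^ h → y.1 = 2 ^ h - 1) →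
        ((∀ x : Fin (2 ^ m), x.1 < 2 ^ h → x ∈ univ.image u) ∧
          (bracketWinner Tm t u).1 = 2 ^ h - 1) → False := by
      intro u hq1 hq2
      have hmem := hq2.1 ⟨0, Nat.two_pow_pos m⟩ hz
      have := hq1.2 _ hmem hz
      simp at this
      omega
    have kmemQ : ∀ (u : Fin (2 ^ t) → Fin (2 ^ m)),
        (((∃ y ∈ univ.image u, y.1 = 2 ^ h - 1) ∧
          ∀ y ∈ univ.image u, y.1 < 2 ^ h → y.1 = 2 ^ h - 1) ∨
        ((∀ x : Fin (2 ^ m), x.1 < 2 ^ h → x ∈ univ.image u) ∧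
          (bracketWinner Tm t u).1 = 2 ^ h - 1)) →
        ∃ y ∈ univ.image u, y.1 = 2 ^ h - 1 := by
      intro u hq
      rcases hq with ⟨he, -⟩ | ⟨-, hK⟩
      · exact he
      · exact ⟨_, winner_mem Tm t u, hK⟩
    have incompatLR : ∀ (f : Fin (2 ^ (t+1)) ↪ Fin (2 ^ m)),
        (∃ y ∈ univ.image (leftF ⇑f), y.1 = 2 ^ h - 1) →
        (∃ y ∈ univ.image (rightF ⇑f), y.1 = 2 ^ h - 1) → False := by
      rintro f ⟨y1, hy1, hk1⟩ ⟨y2, hy2, hk2⟩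
      have : y1 = y2 := Fin.ext (by omega)
      exact Finset.disjoint_left.1 (disj_images f.injective) hy1 (this ▸ hy2)
    -- disjointness of the four pieces
    rw [Finset.card_union_of_disjoint, Finset.card_union_of_disjoint,
      Finset.card_union_of_disjoint]
    rotate_left
    · -- S3 vs S4
      rw [Finset.disjoint_left]
      intro f hf3 hf4
      rw [Finset.mem_filter] at hf3 hf4
      exact incompat12 (rightF ⇑f) hf3.2.2 hf4.2.2
    · -- S2 vs S3 ∪ S4
      rw [Finset.disjoint_left]
      intro f hf2 hf34
      rw [Finset.mem_filter] at hf2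
      rw [Finset.mem_union, Finset.mem_filter, Finset.mem_filter] at hf34
      apply incompatLR f (kmemQ _ (Or.inr hf2.2.2))
      apply kmemQ
      rcases hf34 with ⟨-, -, q⟩ | ⟨-, -, q⟩
      · exact Or.inl q
      · exact Or.inr q
    · -- S1 vs S2 ∪ S3 ∪ S4
      rw [Finset.disjoint_left]
      intro f hf1 hf234
      rw [Finset.mem_filter] at hf1
      rw [Finset.mem_union, Finset.mem_union, Finset.mem_filter, Finset.mem_filter,
        Finset.mem_filter] at hf234
      rcases hf234 with ⟨-, -, q⟩ | ⟨-, -, q⟩ | ⟨-, -, q⟩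
      · exact incompat12 (leftF ⇑f) hf1.2.2 q
      · exact incompatLR f (kmemQ _ (Or.inl hf1.2.2)) (kmemQ _ (Or.inl q))
      · exact incompatLR f (kmemQ _ (Or.inl hf1.2.2)) (kmemQ _ (Or.inr q))
    -- swap: right-half counts equal left-half counts
    rw [card_filter_inst univ (fun (f : Fin (2 ^ (t+1)) ↪ Fin (2 ^ m)) =>
          univ.image ⇑f = A ∧ ((∃ y ∈ univ.image (leftF ⇑f), y.1 = 2 ^ h - 1) ∧
            ∀ y ∈ univ.image (leftF ⇑f), y.1 < 2 ^ h → y.1 = 2 ^ h - 1)) _ inferInstance,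
        card_filter_inst univ (fun (f : Fin (2 ^ (t+1)) ↪ Fin (2 ^ m)) =>
          univ.image ⇑f = A ∧ ((∀ x : Fin (2 ^ m), x.1 < 2 ^ h → x ∈ univ.image (leftF ⇑f)) ∧
            (bracketWinner Tm t (leftF ⇑f)).1 = 2 ^ h - 1)) _ inferInstance,
        card_filter_inst univ (fun (f : Fin (2 ^ (t+1)) ↪ Fin (2 ^ m)) =>
          univ.image ⇑f = A ∧ ((∃ y ∈ univ.image (rightF ⇑f), y.1 = 2 ^ h - 1) ∧
            ∀ y ∈ univ.image (rightF ⇑f), y.1 < 2 ^ h → y.1 = 2 ^ h - 1)) _ inferInstance,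
        card_filter_inst univ (fun (f : Fin (2 ^ (t+1)) ↪ Fin (2 ^ m)) =>
          univ.image ⇑f = A ∧ ((∀ x : Fin (2 ^ m), x.1 < 2 ^ h → x ∈ univ.image (rightF ⇑f)) ∧
            (bracketWinner Tm t (rightF ⇑f)).1 = 2 ^ h - 1)) _ inferInstance]
    have e3 := swap_filter_card (m := m) t A (fun u => (∃ y ∈ univ.image u, y.1 = 2 ^ h - 1) ∧
          ∀ y ∈ univ.image u, y.1 < 2 ^ h → y.1 = 2 ^ h - 1)
        (i1 := inferInstanceAs (DecidablePred fun (f : Fin (2 ^ (t+1)) ↪ Fin (2 ^ m)) =>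
          univ.image ⇑f = A ∧ ((∃ y ∈ univ.image (rightF ⇑f), y.1 = 2 ^ h - 1) ∧
            ∀ y ∈ univ.image (rightF ⇑f), y.1 < 2 ^ h → y.1 = 2 ^ h - 1)))
        (i2 := inferInstanceAs (DecidablePred fun (f : Fin (2 ^ (t+1)) ↪ Fin (2 ^ m)) =>
          univ.image ⇑f = A ∧ ((∃ y ∈ univ.image (leftF ⇑f), y.1 = 2 ^ h - 1) ∧
            ∀ y ∈ univ.image (leftF ⇑f), y.1 < 2 ^ h → y.1 = 2 ^ h - 1)))
    rw [e3,
        swap_filter_card (m := m) t A (fun u => (∀ x : Fin (2 ^ m), x.1 < 2 ^ h → x ∈ univ.image u) ∧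
          (bracketWinner Tm t u).1 = 2 ^ h - 1)
        (i1 := inferInstanceAs (DecidablePred fun (f : Fin (2 ^ (t+1)) ↪ Fin (2 ^ m)) =>
          univ.image ⇑f = A ∧ ((∀ x : Fin (2 ^ m), x.1 < 2 ^ h → x ∈ univ.image (rightF ⇑f)) ∧
            (bracketWinner Tm t (rightF ⇑f)).1 = 2 ^ h - 1)))
        (i2 := inferInstanceAs (DecidablePred fun (f : Fin (2 ^ (t+1)) ↪ Fin (2 ^ m)) =>
          univ.image ⇑f = A ∧ ((∀ x : Fin (2 ^ m), x.1 < 2 ^ h → x ∈ univ.image (leftF ⇑f)) ∧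
            (bracketWinner Tm t (leftF ⇑f)).1 = 2 ^ h - 1)))]
    -- count the two left pieces
    have hc1 : ((univ : Finset (Fin (2 ^ (t+1)) ↪ Fin (2 ^ m))).filter
        fun (f : Fin (2 ^ (t+1)) ↪ Fin (2 ^ m)) => univ.image ⇑f = A ∧ ((∃ y ∈ univ.image (leftF ⇑f), y.1 = 2 ^ h - 1) ∧
          ∀ y ∈ univ.image (leftF ⇑f), y.1 < 2 ^ h → y.1 = 2 ^ h - 1)).card
        = ((2 ^ (t+1) - 2 ^ h).choose (2 ^ t - 1) * (2 ^ t).factorial) * (2 ^ t).factorial := by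
      rw [split_count (m := m) t A hA (fun u => (∃ y ∈ univ.image u, y.1 = 2 ^ h - 1) ∧
          ∀ y ∈ univ.image u, y.1 < 2 ^ h → y.1 = 2 ^ h - 1)
        (i1 := inferInstanceAs (DecidablePred fun (f : Fin (2 ^ (t+1)) ↪ Fin (2 ^ m)) =>
          univ.image ⇑f = A ∧ ((∃ y ∈ univ.image (leftF ⇑f), y.1 = 2 ^ h - 1) ∧
            ∀ y ∈ univ.image (leftF ⇑f), y.1 < 2 ^ h → y.1 = 2 ^ h - 1)))
        (i2 := inferInstanceAs (DecidablePred fun (u : Fin (2 ^ t) ↪ Fin (2 ^ m)) =>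
          univ.image ⇑u ⊆ A ∧ ((∃ y ∈ univ.image ⇑u, y.1 = 2 ^ h - 1) ∧
            ∀ y ∈ univ.image ⇑u, y.1 < 2 ^ h → y.1 = 2 ^ h - 1)))]
      congr 1
      rw [count_emb_R (m := m) (2 ^ t) A (fun B => (∃ y ∈ B, y.1 = 2 ^ h - 1) ∧
          ∀ y ∈ B, y.1 < 2 ^ h → y.1 = 2 ^ h - 1)
        (i1 := inferInstanceAs (DecidablePred fun (u : Fin (2 ^ t) ↪ Fin (2 ^ m)) =>
          univ.image ⇑u ⊆ A ∧ ((∃ y ∈ univ.image ⇑u, y.1 = 2 ^ h - 1) ∧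
            ∀ y ∈ univ.image ⇑u, y.1 < 2 ^ h → y.1 = 2 ^ h - 1)))
        (i2 := inferInstanceAs (DecidablePred fun (B : Finset (Fin (2 ^ m))) =>
          (∃ y ∈ B, y.1 = 2 ^ h - 1) ∧ ∀ y ∈ B, y.1 < 2 ^ h → y.1 = 2 ^ h - 1))]
      congr 1
      rw [ps1 hh hhm A hAr (2 ^ t) h1T, hA]
    have hc2 : ((univ : Finset (Fin (2 ^ (t+1)) ↪ Fin (2 ^ m))).filter
        fun (f : Fin (2 ^ (t+1)) ↪ Fin (2 ^ m)) => univ.image ⇑f = A ∧ ((∀ x : Fin (2 ^ m), x.1 < 2 ^ h → x ∈ univ.image (leftF ⇑f)) ∧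
          (bracketWinner Tm t (leftF ⇑f)).1 = 2 ^ h - 1)).card
        = ((2 ^ (t+1) - 2 ^ h).choose (2 ^ t - 2 ^ h) * gcount h t) * (2 ^ t).factorial := by
      rw [split_count (m := m) t A hA (fun u => (∀ x : Fin (2 ^ m), x.1 < 2 ^ h → x ∈ univ.image u) ∧
          (bracketWinner Tm t u).1 = 2 ^ h - 1)
        (i1 := inferInstanceAs (DecidablePred fun (f : Fin (2 ^ (t+1)) ↪ Fin (2 ^ m)) =>
          univ.image ⇑f = A ∧ ((∀ x : Fin (2 ^ m), x.1 < 2 ^ h → x ∈ univ.image (leftF ⇑f)) ∧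
            (bracketWinner Tm t (leftF ⇑f)).1 = 2 ^ h - 1)))
        (i2 := inferInstanceAs (DecidablePred fun (u : Fin (2 ^ t) ↪ Fin (2 ^ m)) =>
          univ.image ⇑u ⊆ A ∧ ((∀ x : Fin (2 ^ m), x.1 < 2 ^ h → x ∈ univ.image ⇑u) ∧
            (bracketWinner Tm t ⇑u).1 = 2 ^ h - 1)))]
      congr 1
      -- fiberwise over the image of the left half
      set s := ((univ : Finset (Fin (2 ^ t) ↪ Fin (2 ^ m))).filter
        fun (u : Fin (2 ^ t) ↪ Fin (2 ^ m)) => univ.image ⇑u ⊆ A ∧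
          ((∀ x : Fin (2 ^ m), x.1 < 2 ^ h → x ∈ univ.image ⇑u) ∧
            (bracketWinner Tm t ⇑u).1 = 2 ^ h - 1)) with hs
    -- continued below
      have key : ∀ u ∈ s, univ.image ⇑u ∈
          (A.powersetCard (2 ^ t)).filter (fun B => ∀ x : Fin (2 ^ m), x.1 < 2 ^ h → x ∈ B) := by
        intro u hu
        rw [hs, Finset.mem_filter] at hu
        rw [Finset.mem_filter]
        refine ⟨Finset.mem_powersetCard.2 ⟨hu.2.1, ?_⟩, hu.2.2.1⟩
        rw [Finset.card_image_of_injective _ u.injective, Finset.card_univ, Fintype.card_fin]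
      rw [Finset.card_eq_sum_card_fiberwise key]
      have fib : ∀ B ∈ (A.powersetCard (2 ^ t)).filter
          (fun B => ∀ x : Fin (2 ^ m), x.1 < 2 ^ h → x ∈ B),
          (s.filter fun (u : Fin (2 ^ t) ↪ Fin (2 ^ m)) => univ.image ⇑u = B).card
            = gcount h t := by
        intro B hB
        rw [Finset.mem_filter, Finset.mem_powersetCard] at hB
        obtain ⟨⟨hBA, hBk⟩, hBreal⟩ := hB
        rw [← IH B hBk hBreal]
        congr 1
        rw [hs, Finset.filter_filter]
        apply Finset.filter_congr
        intro u _
        constructor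
        · rintro ⟨⟨-, -, hw⟩, he⟩
          exact ⟨he, hw⟩
        · rintro ⟨he, hw⟩
          refine ⟨⟨?_, ?_, hw⟩, he⟩
          · rw [he]; exact hBA
          · intro x hx; rw [he]; exact hBreal x hx
      rw [Finset.sum_congr rfl fib, Finset.sum_const, smul_eq_mul,
        ps2 hh hhm A hAr (2 ^ t) hhT, hA]
    rw [hc1, hc2]
    have hgc : gcount h (t+1) =
        2 * ((2 ^ (t+1) - 2 ^ h).choose (2 ^ t - 1)
            * ((2 ^ t).factorial * (2 ^ t).factorial)
          + (2 ^ (t+1) - 2 ^ h).choose (2 ^ t - 2 ^ h)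
            * ((2 ^ t).factorial * gcount h t)) := by
      rw [gcount, if_neg (by omega)]
    rw [hgc]
    ring

end Main

end SK15

namespace SK15

lemma gcount_h_eq_zero {h : ℕ} (hh : 2 ≤ h) : gcount h h = 0 := by
  obtain ⟨u, rfl⟩ : ∃ u, h = u + 1 := ⟨h - 1, by omega⟩
  rw [gcount, if_pos (le_refl _)]

end SK15

open SK15 in
/-- Let `n = 2^h` and for each `m ≥ h` let `T m` be a tournament on `2^m` agents
containing the superman-kryptonite tournament on `n` agents as a dominant
sub-tournament (the added agents lose to all of the first `n`).  Let `p m` be the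
RSEB winning probability of the kryptonite (agent `n - 1`) in `T m`.  Then
`p h = 0` and for `m ≥ h + 1` the recurrence
`p m = (2/C(2^m, 2^(m-1))) ⬝ [C(2^m - n, 2^(m-1) - 1) + C(2^m - n, 2^(m-1) - n) p (m-1)]`
holds. -/
theorem stmt15 (h : ℕ) (hh : 2 ≤ h) (T : ∀ m : ℕ, Tournament (2 ^ m))
    (hSK : ∀ m, h ≤ m → ∀ i j : Fin (2 ^ m), i.1 < 2 ^ h → j.1 < 2 ^ h →
      ((T m).beats i j ↔
        ((i.1 < j.1 ∧ ¬(i.1 = 0 ∧ j.1 = 2 ^ h - 1)) ∨ (i.1 = 2 ^ h - 1 ∧ j.1 = 0))))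
    (hdummy : ∀ m, h ≤ m → ∀ i j : Fin (2 ^ m), i.1 < 2 ^ h → 2 ^ h ≤ j.1 →
      (T m).beats i j)
    (p : ℕ → ℝ)
    (hp : ∀ m (hm : h ≤ m),
      p m = ((Finset.univ.filter fun σ : Equiv.Perm (Fin (2 ^ m)) =>
          bracketWinner (T m) m σ = ⟨2 ^ h - 1, by
            have h1 : (2:ℕ) ^ h ≤ 2 ^ m := Nat.pow_le_pow_right (by norm_num) hm
            have := Nat.two_pow_pos h; omega⟩).card : ℝ) / (2 ^ m).factorial) :
    p h = 0 ∧
      ∀ m : ℕ, h + 1 ≤ m →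
        p m = (2 / ((2 ^ m).choose (2 ^ (m - 1)) : ℝ)) *
          (((2 ^ m - 2 ^ h).choose (2 ^ (m - 1) - 1) : ℝ) +
            ((2 ^ m - 2 ^ h).choose (2 ^ (m - 1) - 2 ^ h) : ℝ) * p (m - 1)) := by
  have key : ∀ M (hM : h ≤ M),
      ((Finset.univ.filter fun σ : Equiv.Perm (Fin (2 ^ M)) =>
          bracketWinner (T M) M σ = ⟨2 ^ h - 1, by
            have h1 : (2:ℕ) ^ h ≤ 2 ^ M := Nat.pow_le_pow_right (by norm_num) hM
            have := Nat.two_pow_pos h; omega⟩).card) = gcount h M := by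
    intro M hM
    have hA : (univ : Finset (Fin (2 ^ M))).card = 2 ^ M := by
      rw [Finset.card_univ, Fintype.card_fin]
    have hcm := count_main (T M) (hSK M hM) (hdummy M hM) hh hM M hM
      univ hA (fun x _ => mem_univ x)
    rw [← hcm]
    apply Finset.card_bij (i := fun (σ : Equiv.Perm (Fin (2 ^ M)))
      (_ : σ ∈ _) => σ.toEmbedding)
    · intro σ hσ
      rw [Finset.mem_filter] at hσ ⊢
      refine ⟨mem_univ _, ?_, ?_⟩
      · show univ.image ⇑σ = univ
        ext x
        simp only [mem_image, mem_univ, true_and, iff_true]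
        exact ⟨σ.symm x, σ.apply_symm_apply x⟩
      · show (bracketWinner (T M) M ⇑σ).1 = 2 ^ h - 1
        rw [hσ.2]
    · intro σ1 h1 σ2 h2 he
      apply Equiv.coe_fn_injective
      have : ∀ x, σ1.toEmbedding x = σ2.toEmbedding x := fun x => congrFun
        (congrArg (fun (e : Fin (2 ^ M) ↪ Fin (2 ^ M)) => ⇑e) he) x
      funext x
      exact this x
    · intro f hf
      rw [Finset.mem_filter] at hf
      obtain ⟨-, himg, hwin⟩ := hf
      have hsurj : Function.Surjective ⇑f := by
        intro y
        have hy : y ∈ univ.image ⇑f := by rw [himg]; exact mem_univ y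
        simpa [Finset.mem_image] using hy
      refine ⟨Equiv.ofBijective ⇑f ⟨f.injective, hsurj⟩, ?_, ?_⟩
      · rw [Finset.mem_filter]
        refine ⟨mem_univ _, ?_⟩
        show bracketWinner (T M) M ⇑f = _
        exact Fin.ext hwin
      · apply Function.Embedding.ext
        intro x
        rfl
  constructor
  · rw [hp h (le_refl h), key h (le_refl h), gcount_h_eq_zero hh]
    simp
  · intro M hM1
    obtain ⟨m', rfl⟩ : ∃ m', M = m' + 1 := ⟨M - 1, by omega⟩
    have hm' : h ≤ m' := by omega
    simp only [Nat.add_sub_cancel]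
    rw [hp (m'+1) (by omega), hp m' hm', key (m'+1) (by omega), key m' hm']
    have hgc : gcount h (m'+1) = 2 * ((2 ^ (m'+1) - 2 ^ h).choose (2 ^ m' - 1)
            * ((2 ^ m').factorial * (2 ^ m').factorial)
        + (2 ^ (m'+1) - 2 ^ h).choose (2 ^ m' - 2 ^ h)
            * ((2 ^ m').factorial * gcount h m')) := by
      rw [gcount, if_neg (by omega)]
    have hle : (2:ℕ) ^ m' ≤ 2 ^ (m'+1) := Nat.pow_le_pow_right (by norm_num) (by omega)
    have hfacteq : ((2:ℕ) ^ (m'+1)).factorial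
        = (2 ^ (m'+1)).choose (2 ^ m') * (2 ^ m').factorial * (2 ^ m').factorial := by
      have hmf := Nat.choose_mul_factorial_mul_factorial hle
      have hsub : (2:ℕ) ^ (m'+1) - 2 ^ m' = 2 ^ m' := by
        have := pow_succ_fact m'; omega
      rw [hsub] at hmf
      exact hmf.symm
    have hC0 : 0 < (2 ^ (m'+1)).choose (2 ^ m') := Nat.choose_pos hle
    have hF0 : 0 < (2 ^ m').factorial := Nat.factorial_pos _
    have hCne : (((2 ^ (m'+1)).choose (2 ^ m') : ℕ) : ℝ) ≠ 0 :=
      Nat.cast_ne_zero.mpr hC0.ne'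
    have hFne : (((2 ^ m').factorial : ℕ) : ℝ) ≠ 0 :=
      Nat.cast_ne_zero.mpr hF0.ne'
    rw [hgc, hfacteq]
    push_cast
    field_simp
end

section
/- For every power of two n = 2^h ≥ 2, there exists a positive integer ℓ such that Σ_{k=1}^{ℓ} (1 − 2^{−k})^{n−2} · 2^{−k} ≥ 1/(3n). -/
lemma aux18 (m : ℕ) (hm : 2 ≤ m) : (1/3 : ℝ) ≤ (1 - (m:ℝ)⁻¹) ^ (m - 2) := by
  have hx : (2:ℝ) ≤ (m:ℝ) := by exact_mod_cast hm
  have hx0 : (0:ℝ) < m := by linarith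
  have hx1 : (0:ℝ) < (m:ℝ) - 1 := by linarith
  have hinv : (m:ℝ)⁻¹ ≤ 1/2 := by
    rw [inv_le_iff_one_le_mul₀ hx0]; linarith
  have ha0 : (0:ℝ) ≤ 1 - (m:ℝ)⁻¹ := by linarith
  have ha1 : (1:ℝ) - (m:ℝ)⁻¹ ≤ 1 := by
    have : (0:ℝ) ≤ (m:ℝ)⁻¹ := by positivity
    linarith
  have hcast : ((m - 1 : ℕ) : ℝ) = (m:ℝ) - 1 := by
    push_cast [Nat.cast_sub (show 1 ≤ m by omega)]; ring
  -- step 2: 1/3 ≤ a ^ (m-1)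
  have key : (1/3 : ℝ) ≤ (1 - (m:ℝ)⁻¹) ^ (m - 1) := by
    have heq : (1 : ℝ) - (m:ℝ)⁻¹ = ((m:ℝ)/((m:ℝ)-1))⁻¹ := by
      field_simp
    have hb : (m:ℝ)/((m:ℝ)-1) ≤ Real.exp (1/((m:ℝ)-1)) := by
      have h1 := Real.add_one_le_exp (1/((m:ℝ)-1))
      have h2 : (m:ℝ)/((m:ℝ)-1) = 1/((m:ℝ)-1) + 1 := by field_simp; ring
      linarith
    have hbpos : (0:ℝ) < (m:ℝ)/((m:ℝ)-1) := by positivity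
    have hbn : ((m:ℝ)/((m:ℝ)-1)) ^ (m-1) ≤ Real.exp (1/((m:ℝ)-1)) ^ (m-1) :=
      pow_le_pow_left₀ hbpos.le hb _
    have hexp : Real.exp (1/((m:ℝ)-1)) ^ (m-1) = Real.exp 1 := by
      rw [← Real.exp_nat_mul, hcast]
      congr 1
      field_simp
    have hlt3 : ((m:ℝ)/((m:ℝ)-1)) ^ (m-1) ≤ 3 := by
      have := Real.exp_one_lt_d9
      rw [hexp] at hbn
      linarith
    have hpowpos : (0:ℝ) < ((m:ℝ)/((m:ℝ)-1)) ^ (m-1) := by positivity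
    rw [heq, inv_pow]
    calc (1/3 : ℝ) = 3⁻¹ := by norm_num
      _ ≤ (((m:ℝ)/((m:ℝ)-1)) ^ (m-1))⁻¹ := inv_anti₀ hpowpos hlt3
  calc (1/3 : ℝ) ≤ (1 - (m:ℝ)⁻¹) ^ (m - 1) := key
    _ ≤ (1 - (m:ℝ)⁻¹) ^ (m - 2) := pow_le_pow_of_le_one ha0 ha1 (by omega)

/-- For every power of two `n = 2^h ≥ 2` there is a positive integer `ℓ` with
`∑_{k=1}^{ℓ} (1 - 2^(-k))^(n-2) ⬝ 2^(-k) ≥ 1/(3n)`. -/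
theorem stmt18 (h : ℕ) (hh : 1 ≤ h) :
    ∃ ℓ : ℕ, 1 ≤ ℓ ∧
      1 / (3 * (2 : ℝ) ^ h) ≤
        ∑ k ∈ Finset.Icc 1 ℓ, (1 - ((2 : ℝ) ^ k)⁻¹) ^ (2 ^ h - 2) * ((2 : ℝ) ^ k)⁻¹ := by
  refine ⟨h, hh, ?_⟩
  have hm : 2 ≤ 2 ^ h := Nat.one_lt_two_pow_iff.mpr (by omega)
  have hcast : ((2 ^ h : ℕ) : ℝ) = (2:ℝ) ^ h := by push_cast; ring
  have hterm : 1 / (3 * (2 : ℝ) ^ h) ≤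
      (1 - ((2 : ℝ) ^ h)⁻¹) ^ (2 ^ h - 2) * ((2 : ℝ) ^ h)⁻¹ := by
    have hkey : (1/3 : ℝ) ≤ (1 - ((2:ℝ) ^ h)⁻¹) ^ (2 ^ h - 2) := by
      have := aux18 (2 ^ h) hm
      rwa [hcast] at this
    have hpos : (0:ℝ) < ((2:ℝ) ^ h)⁻¹ := by positivity
    have := mul_le_mul_of_nonneg_right hkey hpos.le
    calc 1 / (3 * (2 : ℝ) ^ h) = 1/3 * ((2:ℝ)^h)⁻¹ := by
          field_simp
      _ ≤ _ := this
  refine hterm.trans (Finset.single_le_sum (f := fun k =>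
      (1 - ((2 : ℝ) ^ k)⁻¹) ^ (2 ^ h - 2) * ((2 : ℝ) ^ k)⁻¹) ?_ ?_)
  · intro i _
    have h1 : ((2:ℝ) ^ i)⁻¹ ≤ 1 := by
      have : (1:ℝ) ≤ 2 ^ i := one_le_pow₀ (by norm_num : (1:ℝ) ≤ 2)
      exact inv_le_one_of_one_le₀ this
    exact mul_nonneg (pow_nonneg (by linarith) _) (by positivity)
  · exact Finset.mem_Icc.mpr ⟨hh, le_refl h⟩
end

section
/- Fix positive integers h ≥ 1, n = 2^h, and k ≥ 1. Then lim_{m→∞} C(2^m − 2^h, 2^{m−k} − 1) / C(2^m − 1, 2^{m−k}) = (1 − 2^{−k})^{n−2} · 2^{−k}. -/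
open Filter Finset


theorem keyid (n r a : ℕ) (ha : 2 ≤ a) (hr : 1 ≤ r) (han : a + r ≤ n) :
    (n - a).choose (r - 1) * (n - 1).descFactorial (a - 1) =
      (n - 1).choose r * r * (n - 1 - r).descFactorial (a - 2) := by
  have key : ∀ x y : ℕ, x * ((r-1).factorial * (n - a - (r-1)).factorial) = (n-1).factorial →
      y * ((r-1).factorial * (n - a - (r-1)).factorial) = (n-1).factorial → x = y := by
    intro x y hx hy
    exact Nat.eq_of_mul_eq_mul_right (by positivity) (hx.trans hy.symm)
  apply key
  · -- LHS * X = (n-1)!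
    have h1 : r - 1 ≤ n - a := by omega
    have h2 : a - 1 ≤ n - 1 := by omega
    have e1 := Nat.choose_mul_factorial_mul_factorial h1
    have e2 := Nat.factorial_mul_descFactorial h2
    have e3 : n - 1 - (a - 1) = n - a := by omega
    rw [e3] at e2
    calc (n - a).choose (r-1) * (n-1).descFactorial (a-1) * ((r-1).factorial * (n - a - (r-1)).factorial)
        = ((n - a).choose (r-1) * (r-1).factorial * (n - a - (r-1)).factorial) * (n-1).descFactorial (a-1) := by ring
      _ = (n-a).factorial * (n-1).descFactorial (a-1) := by rw [e1]
      _ = (n-1).factorial := e2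
  · have h1 : r ≤ n - 1 := by omega
    have h2 : a - 2 ≤ n - 1 - r := by omega
    have e1 := Nat.choose_mul_factorial_mul_factorial h1
    have e2 := Nat.factorial_mul_descFactorial h2
    have e3 : n - 1 - r - (a - 2) = n - a - (r - 1) := by omega
    rw [e3] at e2
    have e4 : r.factorial = r * (r-1).factorial := by
      conv_lhs => rw [show r = (r-1)+1 by omega]
      rw [Nat.factorial_succ]; congr 1; omega
    calc (n-1).choose r * r * (n-1-r).descFactorial (a-2) * ((r-1).factorial * (n - a - (r-1)).factorial)
        = (n-1).choose r * (r * (r-1).factorial) * ((n - a - (r-1)).factorial * (n-1-r).descFactorial (a-2)) := by ring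
      _ = (n-1).choose r * r.factorial * ((n - a - (r-1)).factorial * (n-1-r).descFactorial (a-2)) := by rw [e4]
      _ = (n-1).choose r * r.factorial * (n-1-r).factorial := by rw [e2]
      _ = (n-1).factorial := by rw [← e1]; try ring




noncomputable def Gfun (a k : ℕ) (x : ℝ) : ℝ :=
  ((2:ℝ)^k)⁻¹ / (1 - ((a:ℝ) - 1) * x) *
    ∏ i ∈ Finset.range (a - 2), ((1 - ((2:ℝ)^k)⁻¹ - (1 + (i:ℝ)) * x) / (1 - (1 + (i:ℝ)) * x))

theorem Gcont (a k : ℕ) :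
    Tendsto (Gfun a k) (nhds 0)
      (nhds ((1 - ((2:ℝ)^k)⁻¹) ^ (a - 2) * ((2:ℝ)^k)⁻¹)) := by
  have hmain : Tendsto (Gfun a k) (nhds 0)
      (nhds (((2:ℝ)^k)⁻¹ / (1 - ((a:ℝ)-1)*0) *
        ∏ i ∈ Finset.range (a-2),
          ((1 - ((2:ℝ)^k)⁻¹ - (1+(i:ℝ))*0)/(1 - (1+(i:ℝ))*0)))) := by
    unfold Gfun
    apply Tendsto.mul
    · exact Tendsto.div tendsto_const_nhds
        (Continuous.tendsto (by fun_prop) 0) (by norm_num)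
    · exact tendsto_finset_prod _ fun i _ => Tendsto.div
        (Continuous.tendsto (by fun_prop) 0)
        (Continuous.tendsto (by fun_prop) 0) (by norm_num)
  have heq : (((2:ℝ)^k)⁻¹ / (1 - ((a:ℝ)-1)*0) *
        ∏ i ∈ Finset.range (a-2),
          ((1 - ((2:ℝ)^k)⁻¹ - (1+(i:ℝ))*0)/(1 - (1+(i:ℝ))*0)))
      = (1 - ((2:ℝ)^k)⁻¹) ^ (a - 2) * ((2:ℝ)^k)⁻¹ := by
    simp [Finset.prod_const, mul_comm]
  rwa [heq] at hmain

theorem eqlem (h k m : ℕ) (hh : 1 ≤ h) (hk : 1 ≤ k) (hm : h + k ≤ m) :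
    (((2 ^ m - 2 ^ h).choose (2 ^ (m - k) - 1) : ℕ) : ℝ) /
      (((2 ^ m - 1).choose (2 ^ (m - k)) : ℕ) : ℝ)
    = Gfun (2 ^ h) k ((2⁻¹ : ℝ) ^ m) := by
  set n := 2 ^ m with hn
  set a := 2 ^ h with hadef
  set r := 2 ^ (m - k) with hrdef
  have ha : 2 ≤ a := by
    calc 2 = 2 ^ 1 := rfl
    _ ≤ a := Nat.pow_le_pow_right (by norm_num) hh
  have hr : 1 ≤ r := Nat.one_le_two_pow
  have han : a + r ≤ n := by
    have h1 : a ≤ 2 ^ (m - 1) := Nat.pow_le_pow_right (by norm_num) (by omega)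
    have h2 : r ≤ 2 ^ (m - 1) := Nat.pow_le_pow_right (by norm_num) (by omega)
    have h3 : 2 ^ (m - 1) + 2 ^ (m - 1) = n := by
      rw [← two_mul, ← pow_succ']
      congr 1; omega
    omega
  -- abbreviations
  set N : ℝ := (n : ℝ) with hN
  set c : ℝ := ((2:ℝ)^k)⁻¹ with hc
  set ε : ℝ := (2⁻¹ : ℝ) ^ m with he
  have hNe : N * ε = 1 := by
    rw [hN, hn, he]
    push_cast
    rw [← mul_pow]
    norm_num
  have hε : ε ≠ 0 := by positivity
  have hNpos : (0:ℝ) < N := by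
    have : 0 < n := by rw [hn]; positivity
    rw [hN]; exact_mod_cast this
  have hrc : (r : ℝ) = N * c := by
    have h2k : ((2:ℝ)^k) ≠ 0 := by positivity
    have hmul : (r:ℝ) * (2:ℝ)^k = N := by
      rw [hrdef, hN, hn]
      push_cast
      rw [← pow_add]
      congr 1
      omega
    rw [hc, eq_mul_inv_iff_mul_eq₀ h2k, hmul]
  -- step 1 : ratio = r * D1 / D2
  have key := keyid n r a ha hr han
  have hC2 : 0 < (n - 1).choose r := Nat.choose_pos (by omega)
  have hD2 : 0 < (n - 1).descFactorial (a - 1) := Nat.pos_of_ne_zero (fun hz => by have := Nat.descFactorial_eq_zero_iff_lt.1 hz; omega)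
  have step1 : (((n - a).choose (r - 1) : ℕ) : ℝ) / (((n - 1).choose r : ℕ) : ℝ)
      = (r : ℝ) * ((n - 1 - r).descFactorial (a - 2) : ℝ)
        / ((n - 1).descFactorial (a - 1) : ℝ) := by
    have keyR : (((n - a).choose (r - 1) : ℕ) : ℝ) * ((n - 1).descFactorial (a - 1) : ℝ)
        = (((n - 1).choose r : ℕ) : ℝ) * (r : ℝ) * ((n - 1 - r).descFactorial (a - 2) : ℝ) := by
      exact_mod_cast key
    have h1 : (((n - 1).choose r : ℕ) : ℝ) ≠ 0 := by positivity
    have h2 : (((n - 1).descFactorial (a - 1) : ℕ) : ℝ) ≠ 0 := by positivity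
    field_simp
    linear_combination keyR
  -- step 2 : descFactorials as real products
  have hD1p : ((n - 1 - r).descFactorial (a - 2) : ℝ)
      = ∏ i ∈ Finset.range (a - 2), (N - 1 - (r:ℝ) - (i:ℝ)) := by
    rw [Nat.descFactorial_eq_prod_range, Nat.cast_prod]
    refine Finset.prod_congr rfl fun i hi => ?_
    rw [Finset.mem_range] at hi
    rw [Nat.cast_sub (by omega), Nat.cast_sub (by omega), Nat.cast_sub (by omega)]
    push_cast
    rw [hN]
  have hD2p : ((n - 1).descFactorial (a - 1) : ℝ)
      = ∏ i ∈ Finset.range (a - 1), (N - 1 - (i:ℝ)) := by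
    rw [Nat.descFactorial_eq_prod_range, Nat.cast_prod]
    refine Finset.prod_congr rfl fun i hi => ?_
    rw [Finset.mem_range] at hi
    rw [Nat.cast_sub (by omega), Nat.cast_sub (by omega)]
    push_cast
    rw [hN]
  -- step 3 : rewrite Gfun factors
  have hGprod : ∏ i ∈ Finset.range (a - 2),
        ((1 - c - (1 + (i:ℝ)) * ε) / (1 - (1 + (i:ℝ)) * ε))
      = ∏ i ∈ Finset.range (a - 2), ((N - 1 - (r:ℝ) - (i:ℝ)) / (N - 1 - (i:ℝ))) := by
    refine Finset.prod_congr rfl fun i hi => ?_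
    have e1 : 1 - c - (1 + (i:ℝ)) * ε = ε * (N - 1 - (r:ℝ) - (i:ℝ)) := by
      linear_combination (c - 1) * hNe + ε * hrc
    have e2 : 1 - (1 + (i:ℝ)) * ε = ε * (N - 1 - (i:ℝ)) := by
      linear_combination (-1 : ℝ) * hNe
    rw [e1, e2, mul_div_mul_left _ _ hε]
  have hGhead : c / (1 - ((a:ℝ) - 1) * ε) = (r : ℝ) / (N - ((a:ℝ) - 1)) := by
    have e3 : c = ε * (r : ℝ) := by linear_combination (-c) * hNe - ε * hrc
    have e4 : 1 - ((a:ℝ) - 1) * ε = ε * (N - ((a:ℝ) - 1)) := by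
      linear_combination (-1 : ℝ) * hNe
    rw [e3, e4, mul_div_mul_left _ _ hε]
  -- nonvanishing of denominators
  have hterm : ∀ i ∈ Finset.range (a - 2), (N - 1 - (i:ℝ)) ≠ 0 := by
    intro i hi
    rw [Finset.mem_range] at hi
    have : (i:ℝ) + 1 < N := by
      rw [hN]; exact_mod_cast by omega
    nlinarith
  have hP2 : (∏ i ∈ Finset.range (a - 2), (N - 1 - (i:ℝ))) ≠ 0 :=
    Finset.prod_ne_zero_iff.2 hterm
  have hlast : N - ((a:ℝ) - 1) ≠ 0 := by
    have : (a:ℝ) < N := by rw [hN]; exact_mod_cast by omega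
    nlinarith
  -- assemble
  rw [step1, hD1p, hD2p]
  unfold Gfun
  rw [← hc, hGprod, hGhead]
  rw [show a - 1 = (a - 2) + 1 by omega, Finset.prod_range_succ]
  have hcast : ((a - 2 : ℕ) : ℝ) = (a:ℝ) - 2 := by
    rw [Nat.cast_sub ha]; norm_num
  rw [hcast]
  rw [Finset.prod_div_distrib]
  rw [show N - 1 - ((a:ℝ) - 2) = N - ((a:ℝ) - 1) by ring]
  rw [div_mul_div_comm, mul_comm (N - ((a:ℝ) - 1))]

/-- For fixed `h ≥ 1`, `n = 2^h`, and `k ≥ 1`,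
`C(2^m - 2^h, 2^(m-k) - 1) / C(2^m - 1, 2^(m-k)) → (1 - 2^(-k))^(n-2) ⬝ 2^(-k)`
as `m → ∞`. -/
theorem stmt19 (h k : ℕ) (hh : 1 ≤ h) (hk : 1 ≤ k) :
    Filter.Tendsto
      (fun m : ℕ =>
        (((2 ^ m - 2 ^ h).choose (2 ^ (m - k) - 1) : ℕ) : ℝ) /
          (((2 ^ m - 1).choose (2 ^ (m - k)) : ℕ) : ℝ))
      Filter.atTop
      (nhds ((1 - ((2 : ℝ) ^ k)⁻¹) ^ (2 ^ h - 2) * ((2 : ℝ) ^ k)⁻¹)) := by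
  have hhalf : Tendsto (fun m : ℕ => (2⁻¹ : ℝ) ^ m) atTop (nhds 0) :=
    tendsto_pow_atTop_nhds_zero_of_lt_one (by norm_num) (by norm_num)
  have hcomp := (Gcont (2 ^ h) k).comp hhalf
  refine Filter.Tendsto.congr' ?_ hcomp
  filter_upwards [Filter.eventually_ge_atTop (h + k)] with m hm
  simp only [Function.comp_apply]
  exact (eqlem h k m hh hk hm).symm
end
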